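/- arXiv:1601.00198 — 7 statements merged into one kernel-verified Lean document; each statement's English description precedes it below -/
import Mathlib

section
/- For any packing integer program (P), any partition J = {J_1,…,J_q} of the column index set [n] of A, and any support list 𝒱 of subsets of the vertex set of the packing interaction graph G = G^{pack}_{A,J}, the optimum over the column block-sparse closure satisfies z^{𝒱,P} ≤ η^𝒱(G) · z^I, where η^𝒱(G) is the fractional mixed chromatic number of G with respect to 𝒱. -/
open Finset

/-- The dot product `cᵀx` of two vectors in `ℚⁿ`. -/
def dotp {n : ℕ} (c x : Fin n → ℚ) : ℚ := ∑ j, c j * x j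

/-- The feasible region `P` of the MILP `Ax ≤ b`, `x ≥ 0`, `x_j ∈ ℤ` for `j ∈ L`. -/
def mipSet {m n : ℕ} (A : Matrix (Fin m) (Fin n) ℚ) (b : Fin m → ℚ)
    (L : Finset (Fin n)) : Set (Fin n → ℚ) :=
  {x | (∀ i, ∑ j, A i j * x j ≤ b i) ∧ (∀ j, 0 ≤ x j) ∧ ∀ j ∈ L, ∃ z : ℤ, x j = (z : ℚ)}

/-- The LP relaxation `P^LP`. -/
def lpSet {m n : ℕ} (A : Matrix (Fin m) (Fin n) ℚ) (b : Fin m → ℚ) : Set (Fin n → ℚ) :=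
  {x | (∀ i, ∑ j, A i j * x j ≤ b i) ∧ (∀ j, 0 ≤ x j)}

/-- The integer hull `P^I = conv(P)`. -/
def intHull {m n : ℕ} (A : Matrix (Fin m) (Fin n) ℚ) (b : Fin m → ℚ)
    (L : Finset (Fin n)) : Set (Fin n → ℚ) :=
  convexHull ℚ (mipSet A b L)

/-- The sparse closure `P^(N)`: the LP relaxation intersected with all halfspaces
`αᵀx ≤ β` that are valid for `P^I` and whose support is contained in `N`. -/
def sparseClosure {m n : ℕ} (A : Matrix (Fin m) (Fin n) ℚ) (b : Fin m → ℚ)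
    (L : Finset (Fin n)) (N : Set (Fin n)) : Set (Fin n → ℚ) :=
  lpSet A b ∩
    ⋂ (α : Fin n → ℚ) (β : ℚ)
      (_ : (∀ x ∈ intHull A b L, dotp α x ≤ β) ∧ ∀ j, α j ≠ 0 → j ∈ N),
      {x | dotp α x ≤ β}

/-- The packing interaction graph of `A` w.r.t. the partition of columns given by
`π : Fin n → Fin q` (part `J_u = π⁻¹(u)`): nodes `u ≠ v` are adjacent iff some row of `A`
has nonzero entries in a column of `J_u` and in a column of `J_v`. -/
def packGraph {m n q : ℕ} (A : Matrix (Fin m) (Fin n) ℚ) (π : Fin n → Fin q) :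
    SimpleGraph (Fin q) where
  Adj u v := u ≠ v ∧ ∃ i a₁ a₂, π a₁ = u ∧ π a₂ = v ∧ A i a₁ ≠ 0 ∧ A i a₂ ≠ 0
  symm := by
    constructor
    rintro u v ⟨huv, i, a₁, a₂, h1, h2, h3, h4⟩
    exact ⟨huv.symm, i, a₂, a₁, h2, h1, h4, h3⟩
  loopless := by
    constructor
    rintro u ⟨h, -⟩
    exact h rfl

/-- The sparse closure `P^(S)` for a set `S` of nodes of the packing interaction graph. -/
def blockClosure {m n q : ℕ} (A : Matrix (Fin m) (Fin n) ℚ) (b : Fin m → ℚ)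
    (L : Finset (Fin n)) (π : Fin n → Fin q) (S : Finset (Fin q)) : Set (Fin n → ℚ) :=
  sparseClosure A b L {j | π j ∈ S}

/-- The column block-sparse closure `P^{𝒱,P} = ⋂_{S ∈ 𝒱} P^(S)` for a support list `𝒱`. -/
def listClosure {m n q : ℕ} (A : Matrix (Fin m) (Fin n) ℚ) (b : Fin m → ℚ)
    (L : Finset (Fin n)) (π : Fin n → Fin q) (𝒱 : Finset (Finset (Fin q))) :
    Set (Fin n → ℚ) :=
  ⋂ S ∈ 𝒱, blockClosure A b L π S

/-- The super sparse closure `P^{S.S.}`: support list of all singletons. -/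
def superSparseClosure {m n q : ℕ} (A : Matrix (Fin m) (Fin n) ℚ) (b : Fin m → ℚ)
    (L : Finset (Fin n)) (π : Fin n → Fin q) : Set (Fin n → ℚ) :=
  ⋂ u : Fin q, blockClosure A b L π {u}

/-- The natural sparse closure `P^{N.S.}`: for each row `i` of `A`, add all cuts supported
on the variables of the blocks touched by row `i`. -/
def naturalSparseClosure {m n q : ℕ} (A : Matrix (Fin m) (Fin n) ℚ) (b : Fin m → ℚ)
    (L : Finset (Fin n)) (π : Fin n → Fin q) : Set (Fin n → ℚ) :=
  ⋂ i : Fin m, sparseClosure A b L {j | ∃ j', π j' = π j ∧ A i j' ≠ 0}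

/-- A mixed stable set of `G` subordinate to the collection `𝒱`: a collection `M` of subsets
of vertices, each contained in a member of `𝒱`, pairwise disjoint, with no edge of `G`
between distinct members. -/
def MixedStableSet {V : Type*} (G : SimpleGraph V) (𝒱 : Set (Finset V))
    (M : Finset (Finset V)) : Prop :=
  (∀ s ∈ M, ∃ t ∈ 𝒱, s ⊆ t) ∧
  (∀ s ∈ M, ∀ t ∈ M, s ≠ t → Disjoint s t) ∧
  (∀ s ∈ M, ∀ t ∈ M, s ≠ t → ∀ u ∈ s, ∀ v ∈ t, ¬ G.Adj u v)

lemma eps_sup' (S : Set ℚ) (hne : S.Nonempty) (B : ℚ) (hB : ∀ a ∈ S, a ≤ B)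
    {ε : ℚ} (hε : 0 < ε) : ∃ u : ℚ, (∀ a ∈ S, a ≤ u) ∧ ∃ a ∈ S, u - ε < a := by
  set T : Set ℝ := (fun a : ℚ => (a : ℝ)) '' S with hT
  have hTne : T.Nonempty := hne.image _
  have hTbdd : BddAbove T := ⟨(B : ℝ), by
    rintro t ⟨a, ha, rfl⟩
    show (a : ℝ) ≤ (B : ℝ)
    exact_mod_cast hB a ha⟩
  set r := sSup T with hr
  have hlt : r < r + (ε : ℝ) / 2 := by
    have : (0:ℝ) < (ε:ℝ)/2 := by positivity
    linarith
  obtain ⟨u, hu1, hu2⟩ := exists_rat_btwn hlt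
  refine ⟨u, ?_, ?_⟩
  · intro a ha
    have h1 : (a : ℝ) ≤ r := le_csSup hTbdd ⟨a, ha, rfl⟩
    have : (a : ℝ) ≤ (u : ℝ) := le_of_lt (lt_of_le_of_lt h1 hu1)
    exact_mod_cast this
  · have h2 : ((u - ε : ℚ) : ℝ) < r := by push_cast; linarith
    obtain ⟨t, htT, hlt2⟩ := exists_lt_of_lt_csSup hTne h2
    obtain ⟨a, ha, rfl⟩ := htT
    have : ((u - ε : ℚ) : ℝ) < (a : ℝ) := hlt2
    exact ⟨a, ha, by exact_mod_cast this⟩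

lemma dotp_isLinear {n : ℕ} (α : Fin n → ℚ) : IsLinearMap ℚ (dotp α) := by
  constructor
  · intro x y; simp [dotp, Pi.add_apply, mul_add, Finset.sum_add_distrib]
  · intro a x; simp [dotp, Pi.smul_apply, smul_eq_mul, Finset.mul_sum, mul_left_comm]

lemma dotp_hull_le {m n : ℕ} (A : Matrix (Fin m) (Fin n) ℚ) (b : Fin m → ℚ)
    (L : Finset (Fin n)) (α : Fin n → ℚ) (β : ℚ)
    (h : ∀ x ∈ mipSet A b L, dotp α x ≤ β) :
    ∀ x ∈ intHull A b L, dotp α x ≤ β := by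
  intro x hx
  have hconv : Convex ℚ {x : Fin n → ℚ | dotp α x ≤ β} :=
    convex_halfSpace_le (dotp_isLinear α) β
  exact convexHull_min h hconv hx

set_option maxHeartbeats 2000000 in
/-- **Theorem (packing).** For a packing integer program with `A, b, c ≥ 0`, a partition of
the columns (given by the surjection `π`) and any support list `𝒱`, the optimum over the
column block-sparse closure is at most `η^𝒱(G) · z^I`, where `η^𝒱(G)` is the fractional
mixed chromatic number of the packing interaction graph w.r.t. `𝒱`.  The fractional mixed
chromatic number is encoded by quantifying over all feasible fractional covers `y` by mixed
stable sets subordinate to `𝒱`; the bound then holds with `Σ_M y_M` in place of `η^𝒱(G)`. -/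
theorem packing_listClosure_le_fracMixedChromatic_mul_zI
    {m n q : ℕ}
    (A : Matrix (Fin m) (Fin n) ℚ) (b : Fin m → ℚ) (c : Fin n → ℚ) (L : Finset (Fin n))
    (hA : ∀ i j, 0 ≤ A i j) (hb : ∀ i, 0 ≤ b i) (hc : ∀ j, 0 ≤ c j)
    (π : Fin n → Fin q) (hπ : Function.Surjective π)
    (𝒱 : Finset (Finset (Fin q)))
    -- `y` is any feasible solution to the LP defining the fractional mixed chromatic number:
    (y : Finset (Finset (Fin q)) → ℚ)
    (hy0 : ∀ M, 0 ≤ y M)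
    (hysupp : ∀ M, y M ≠ 0 → MixedStableSet (packGraph A π) (↑𝒱) M)
    (hycover : ∀ v : Fin q,
      (1 : ℚ) ≤ ∑ M : Finset (Finset (Fin q)), y M * (if ∃ s ∈ M, v ∈ s then 1 else 0))
    -- `xI` attains the integer optimum `z^I`:
    (xI : Fin n → ℚ) (hxI : xI ∈ intHull A b L)
    (hxImax : ∀ x ∈ intHull A b L, dotp c x ≤ dotp c xI) :
    -- `z^{𝒱,P} ≤ (Σ_M y_M) · z^I`:
    ∀ x ∈ listClosure A b L π 𝒱,
      dotp c x ≤ (∑ M : Finset (Finset (Fin q)), y M) * dotp c xI := by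
    classical
  intro x hx
  set zI := dotp c xI with hzIdef
  -- the zero point is feasible
  have h0mem : (fun _ : Fin n => (0:ℚ)) ∈ mipSet A b L := by
    refine ⟨fun i => by simpa using hb i, fun j => le_refl 0, fun j _ => ⟨0, rfl⟩⟩
  have hzI0 : 0 ≤ zI := by
    have := hxImax _ (subset_convexHull ℚ _ h0mem)
    simpa [dotp] using this
  have hxS : ∀ S ∈ 𝒱, x ∈ blockClosure A b L π S := by
    simp only [listClosure, Set.mem_iInter] at hx
    exact hx
  -- trivial case n = 0
  rcases Nat.eq_zero_or_pos n with hn | hn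
  · subst hn
    simp [dotp, hzIdef]
  -- every coordinate of x is nonnegative (x lies in the LP relaxation)
  have hxlp : x ∈ lpSet A b := by
    obtain ⟨v⟩ : Nonempty (Fin q) := ⟨π ⟨0, hn⟩⟩
    have h1 := hycover v
    have hne : ∑ M : Finset (Finset (Fin q)), y M * (if ∃ s ∈ M, v ∈ s then 1 else 0) ≠ 0 := by
      intro h; rw [h] at h1; linarith
    obtain ⟨M, -, hM⟩ := Finset.exists_ne_zero_of_sum_ne_zero hne
    have hyM : y M ≠ 0 := by
      intro h; apply hM; rw [h, zero_mul]
    have hind : ∃ s ∈ M, v ∈ s := by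
      by_contra h; apply hM; rw [if_neg h, mul_zero]
    obtain ⟨s, hsM, -⟩ := hind
    obtain ⟨t, ht𝒱, -⟩ := (hysupp M hyM).1 s hsM
    have := hxS t ht𝒱
    exact this.1
  have hxnn : ∀ j, 0 ≤ x j := hxlp.2
  -- KEY LEMMA
  have key : ∀ M : Finset (Finset (Fin q)), MixedStableSet (packGraph A π) (↑𝒱) M →
      ∑ j, (if ∃ s ∈ M, π j ∈ s then c j * x j else 0) ≤ zI := by
    intro M hM
    set αf : Finset (Fin q) → Fin n → ℚ := fun s j => if π j ∈ s then c j else 0 with hαf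
    -- uniqueness of covering set
    have huniq : ∀ (j : Fin n) (s : Finset (Fin q)), s ∈ M → π j ∈ s →
        ∀ (h : ∃ s, s ∈ M ∧ π j ∈ s), h.choose = s := by
      intro j s hs hj h
      by_contra hne
      have hd := hM.2.1 h.choose h.choose_spec.1 s hs hne
      exact (Finset.disjoint_left.mp hd h.choose_spec.2) hj
    -- decomposition of covered sums
    have hdecomp : ∀ w : Fin n → ℚ,
        ∑ j, (if ∃ s ∈ M, π j ∈ s then c j * w j else 0)
          = ∑ s ∈ M, dotp (αf s) w := by
      intro w
      have hswap : ∑ s ∈ M, dotp (αf s) w = ∑ j, ∑ s ∈ M, αf s j * w j := by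
        rw [Finset.sum_comm]
        rfl
      rw [hswap]
      refine Finset.sum_congr rfl ?_
      intro j _
      by_cases h : ∃ s, s ∈ M ∧ π j ∈ s
      · rw [if_pos h, Finset.sum_eq_single h.choose]
        · rw [hαf]; simp only []
          rw [if_pos h.choose_spec.2]
        · intro s hs hne
          rw [hαf]; simp only []
          rw [if_neg, zero_mul]
          intro hmem
          exact hne (huniq j s hs hmem h).symm
        · intro habs; exact absurd h.choose_spec.1 habs
      · rw [if_neg h]
        symm
        apply Finset.sum_eq_zero
        intro s hs
        rw [hαf]; simp only []
        rw [if_neg, zero_mul]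
        intro hmem
        exact h ⟨s, hs, hmem⟩
    -- the ε-argument
    have hmain : ∀ ε : ℚ, 0 < ε →
        ∑ j, (if ∃ s ∈ M, π j ∈ s then c j * x j else 0) ≤ zI + ε := by
      intro ε hε
      set ε' : ℚ := ε / (M.card + 1) with hε'def
      have hε' : 0 < ε' := by rw [hε'def]; positivity
      -- choose, for each s ∈ M, an almost-tight valid bound and witness
      have hget : ∀ s : Finset (Fin q), ∃ p : ℚ × (Fin n → ℚ), s ∈ M →
          p.2 ∈ mipSet A b L ∧
          p.1 - ε' < dotp (αf s) p.2 ∧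
          dotp (αf s) x ≤ p.1 ∧
          (∀ x' ∈ mipSet A b L, dotp (αf s) x' ≤ p.1) := by
        intro s
        by_cases hs : s ∈ M
        · obtain ⟨T, hT𝒱, hsT⟩ := hM.1 s hs
          rw [Finset.mem_coe] at hT𝒱
          -- bound the image set
          have hub : ∀ a ∈ (fun x' => dotp (αf s) x') '' mipSet A b L, a ≤ zI := by
            rintro a ⟨x', hx', rfl⟩
            have h1 : dotp (αf s) x' ≤ dotp c x' := by
              apply Finset.sum_le_sum
              intro j _
              rw [hαf]; simp only []
              by_cases hj : π j ∈ s
              · rw [if_pos hj]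
              · rw [if_neg hj, zero_mul]
                exact mul_nonneg (hc j) (hx'.2.1 j)
            exact h1.trans (hxImax _ (subset_convexHull ℚ _ hx'))
          obtain ⟨u, hu1, a, ⟨x', hx', rfl⟩, hu2⟩ :=
            eps_sup' ((fun x' => dotp (αf s) x') '' mipSet A b L)
              ⟨_, Set.mem_image_of_mem _ h0mem⟩ zI hub hε'
          refine ⟨(u, x'), fun _ => ⟨hx', hu2, ?_, ?_⟩⟩
          · -- x satisfies the sparse cut (αf s, u) since its support lies in T ∈ 𝒱
            have hval : ∀ x'' ∈ intHull A b L, dotp (αf s) x'' ≤ u :=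
              dotp_hull_le A b L _ _ (fun x'' hx'' => hu1 _ ⟨x'', hx'', rfl⟩)
            have hsupp : ∀ j, αf s j ≠ 0 → j ∈ {j | π j ∈ T} := by
              intro j hj
              rw [hαf] at hj; simp only [] at hj
              by_cases hmem : π j ∈ s
              · exact hsT hmem
              · rw [if_neg hmem] at hj; exact absurd rfl hj
            have hxT := (hxS T hT𝒱).2
            simp only [Set.mem_iInter] at hxT
            exact hxT (αf s) u ⟨hval, hsupp⟩
          · intro x'' hx''
            exact hu1 _ ⟨x'', hx'', rfl⟩
        · exact ⟨(0, fun _ => 0), fun h => absurd h hs⟩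
      choose p hp using hget
      set xw : Finset (Fin q) → Fin n → ℚ := fun s => (p s).2 with hxw
      set βf : Finset (Fin q) → ℚ := fun s => (p s).1 with hβf
      -- the combined solution
      set xstar : Fin n → ℚ :=
        fun j => if h : ∃ s, s ∈ M ∧ π j ∈ s then xw h.choose j else 0 with hxstar
      -- xstar is feasible
      have hstarmem : xstar ∈ mipSet A b L := by
        refine ⟨?_, ?_, ?_⟩
        · intro i
          by_cases hD : ∃ j, A i j ≠ 0 ∧ ∃ s, s ∈ M ∧ π j ∈ s
          · obtain ⟨j₀, hA0, hcov0⟩ := hD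
            set s₀ := hcov0.choose with hs₀
            have hs₀M : s₀ ∈ M := hcov0.choose_spec.1
            have hs₀j : π j₀ ∈ s₀ := hcov0.choose_spec.2
            have hle : ∀ j, A i j * xstar j ≤ A i j * xw s₀ j := by
              intro j
              by_cases hAj : A i j = 0
              · rw [hAj, zero_mul, zero_mul]
              by_cases hcov : ∃ s, s ∈ M ∧ π j ∈ s
              · have hsM := hcov.choose_spec.1
                have hsj := hcov.choose_spec.2
                have heq : hcov.choose = s₀ := by
                  by_contra hne
                  have hadj : (packGraph A π).Adj (π j₀) (π j) := by
                    refine ⟨?_, i, j₀, j, rfl, rfl, hA0, hAj⟩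
                    intro hpij
                    rw [hpij] at hs₀j
                    have hd := hM.2.1 s₀ hs₀M hcov.choose hsM (Ne.symm hne)
                    exact (Finset.disjoint_left.mp hd hs₀j) hsj
                  exact hM.2.2 s₀ hs₀M hcov.choose hsM (Ne.symm hne) _ hs₀j _ hsj hadj
                rw [hxstar]; simp only []
                rw [dif_pos hcov, heq]
              · rw [hxstar]; simp only []
                rw [dif_neg hcov, mul_zero]
                exact mul_nonneg (hA i j) (((hp s₀ hs₀M).1).2.1 j)
            calc ∑ j, A i j * xstar j ≤ ∑ j, A i j * xw s₀ j :=
                  Finset.sum_le_sum fun j _ => hle j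
              _ ≤ b i := ((hp s₀ hs₀M).1).1 i
          · have hz : ∀ j, A i j * xstar j = 0 := by
              intro j
              by_cases hAj : A i j = 0
              · rw [hAj, zero_mul]
              · have hcov : ¬ ∃ s, s ∈ M ∧ π j ∈ s := fun h => hD ⟨j, hAj, h⟩
                rw [hxstar]; simp only []
                rw [dif_neg hcov, mul_zero]
            rw [Finset.sum_congr rfl fun j _ => hz j]
            simpa using hb i
        · intro j
          rw [hxstar]; simp only []
          by_cases hcov : ∃ s, s ∈ M ∧ π j ∈ s
          · rw [dif_pos hcov]
            exact ((hp _ hcov.choose_spec.1).1).2.1 j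
          · rw [dif_neg hcov]
        · intro j hj
          rw [hxstar]; simp only []
          by_cases hcov : ∃ s, s ∈ M ∧ π j ∈ s
          · rw [dif_pos hcov]
            exact ((hp _ hcov.choose_spec.1).1).2.2 j hj
          · rw [dif_neg hcov]; exact ⟨0, rfl⟩
      -- value of xstar
      have hzero : ∀ j, ¬ (∃ s, s ∈ M ∧ π j ∈ s) → xstar j = 0 := by
        intro j hcov
        rw [hxstar]; simp only []
        rw [dif_neg hcov]
      have hval : dotp c xstar = ∑ s ∈ M, dotp (αf s) (xw s) := by
        have h1 : dotp c xstar
            = ∑ j, (if ∃ s ∈ M, π j ∈ s then c j * xstar j else 0) := by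
          rw [dotp]
          refine Finset.sum_congr rfl ?_
          intro j _
          by_cases hcov : ∃ s, s ∈ M ∧ π j ∈ s
          · rw [if_pos hcov]
          · rw [if_neg hcov, hzero j hcov, mul_zero]
        rw [h1, hdecomp xstar]
        refine Finset.sum_congr rfl ?_
        intro s hs
        rw [dotp, dotp]
        refine Finset.sum_congr rfl ?_
        intro j _
        rw [hαf]; simp only []
        by_cases hj : π j ∈ s
        · rw [if_pos hj]
          have hcov : ∃ s, s ∈ M ∧ π j ∈ s := ⟨s, hs, hj⟩
          have : xstar j = xw s j := by
            rw [hxstar]; simp only []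
            rw [dif_pos hcov, huniq j s hs hj hcov]
          rw [this]
        · rw [if_neg hj, zero_mul, zero_mul]
      -- sum of bounds is at most zI + ε
      have hβsum : ∑ s ∈ M, βf s ≤ zI + ε := by
        have h1 : ∑ s ∈ M, βf s ≤ ∑ s ∈ M, (dotp (αf s) (xw s) + ε') := by
          refine Finset.sum_le_sum ?_
          intro s hs
          have := (hp s hs).2.1
          linarith
        have h2 : ∑ s ∈ M, (dotp (αf s) (xw s) + ε')
            = dotp c xstar + M.card * ε' := by
          rw [Finset.sum_add_distrib, hval, Finset.sum_const, nsmul_eq_mul]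
        have h3 : dotp c xstar ≤ zI := hxImax _ (subset_convexHull ℚ _ hstarmem)
        have h4 : (M.card : ℚ) * ε' ≤ ε := by
          rw [hε'def]
          rw [div_eq_mul_inv, ← mul_assoc]
          have hpos : (0:ℚ) < (M.card : ℚ) + 1 := by positivity
          rw [mul_comm (M.card : ℚ) ε, mul_assoc]
          have : (M.card : ℚ) * ((M.card : ℚ) + 1)⁻¹ ≤ 1 := by
            rw [mul_inv_le_iff₀ hpos]
            linarith
          nlinarith
        linarith
      -- conclude
      calc ∑ j, (if ∃ s ∈ M, π j ∈ s then c j * x j else 0)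
          = ∑ s ∈ M, dotp (αf s) x := hdecomp x
        _ ≤ ∑ s ∈ M, βf s := Finset.sum_le_sum fun s hs => (hp s hs).2.2.1
        _ ≤ zI + ε := hβsum
    by_contra hcon
    push_neg at hcon
    have := hmain ((∑ j, (if ∃ s ∈ M, π j ∈ s then c j * x j else 0) - zI) / 2)
      (by linarith)
    linarith
  -- MAIN CHAIN
  calc dotp c x = ∑ j, c j * x j := rfl
    _ ≤ ∑ j, (∑ M : Finset (Finset (Fin q)), y M * (if ∃ s ∈ M, π j ∈ s then 1 else 0))
          * (c j * x j) := by
        refine Finset.sum_le_sum ?_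
        intro j _
        exact le_mul_of_one_le_left (mul_nonneg (hc j) (hxnn j)) (hycover (π j))
    _ = ∑ M : Finset (Finset (Fin q)), y M
          * ∑ j, (if ∃ s ∈ M, π j ∈ s then c j * x j else 0) := by
        simp only [Finset.sum_mul, Finset.mul_sum]
        rw [Finset.sum_comm]
        refine Finset.sum_congr rfl ?_
        intro M _
        refine Finset.sum_congr rfl ?_
        intro j _
        by_cases h : ∃ s ∈ M, π j ∈ s
        · simp [h, mul_assoc]
        · simp [h]
    _ ≤ ∑ M : Finset (Finset (Fin q)), y M * zI := by
        refine Finset.sum_le_sum ?_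
        intro M _
        by_cases hyM : y M = 0
        · rw [hyM, zero_mul, zero_mul]
        · exact mul_le_mul_of_nonneg_left (key M (hysupp M hyM)) (hy0 M)
    _ = (∑ M : Finset (Finset (Fin q)), y M) * zI := by rw [Finset.sum_mul]
end

section
/- For every ε > 0 there exists a packing integer program (P) and a partition J of the column index set of A such that the packing interaction graph G^{pack}_{A,J} is a 3-cycle and the super sparse closure optimum satisfies z^{S.S.} ≥ (3 − ε) · z^I. -/
open Finset

lemma convex_dotp_le {n : ℕ} (α : Fin n → ℚ) (β : ℚ) :
    Convex ℚ {x : Fin n → ℚ | dotp α x ≤ β} := by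
  intro x hx y hy a b ha hb hab
  simp only [Set.mem_setOf_eq, dotp] at *
  have key : ∑ j, α j * (a • x + b • y) j
      = a * ∑ j, α j * x j + b * ∑ j, α j * y j := by
    rw [Finset.mul_sum, Finset.mul_sum, ← Finset.sum_add_distrib]
    refine Finset.sum_congr rfl fun j _ => ?_
    simp only [Pi.add_apply, Pi.smul_apply, smul_eq_mul]
    ring
  rw [key]
  calc a * ∑ j, α j * x j + b * ∑ j, α j * y j
      ≤ a * β + b * β := by
        gcongr
    _ = β := by rw [← add_mul, hab, one_mul]

/-- **Theorem (tightness for 3-cycles, super sparse cuts).** For every `ε > 0` there is a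
packing integer program and a column partition whose packing interaction graph is a
3-cycle, with `z^{S.S.} ≥ (3 - ε) · z^I`. -/
theorem packing_superSparse_threeCycle_tight (ε : ℚ) (hε : 0 < ε) :
    ∃ (m n : ℕ) (A : Matrix (Fin m) (Fin n) ℚ) (b : Fin m → ℚ) (c : Fin n → ℚ)
      (L : Finset (Fin n)) (π : Fin n → Fin 3),
      (∀ i j, 0 ≤ A i j) ∧ (∀ i, 0 ≤ b i) ∧ (∀ j, 0 ≤ c j) ∧
      Function.Surjective π ∧
      Nonempty (packGraph A π ≃g SimpleGraph.cycleGraph 3) ∧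
      ∃ xI ∈ intHull A b L,
        (∀ x ∈ intHull A b L, dotp c x ≤ dotp c xI) ∧
        ∃ xS ∈ superSparseClosure A b L π, (3 - ε) * dotp c xI ≤ dotp c xS := by
  set δ : ℚ := min (2 * ε / 3) (1/2) with hδdef
  have hδpos : 0 < δ := lt_min (by linarith) (by norm_num)
  have hδhalf : δ ≤ 1/2 := min_le_right _ _
  have hδε : δ ≤ 2 * ε / 3 := min_le_left _ _
  refine ⟨3, 3, (fun i j => if i = j then 0 else 1), (fun _ => 2 - δ),
    (fun _ => 1), Finset.univ, id, ?_, ?_, ?_, Function.surjective_id, ?_, ?_⟩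
  · intro i j; by_cases h : i = j <;> simp [h]
  · intro i; show (0:ℚ) ≤ 2 - δ; linarith
  · intro j; norm_num
  · -- graph isomorphism
    refine ⟨⟨Equiv.refl _, ?_⟩⟩
    intro u v
    rw [SimpleGraph.cycleGraph_three_eq_top]
    simp only [Equiv.refl_apply, SimpleGraph.top_adj, packGraph]
    constructor
    · intro huv
      refine ⟨huv, ?_⟩
      fin_cases u <;> fin_cases v
      · exact absurd rfl huv
      · exact ⟨2, 0, 1, rfl, rfl, by decide, by decide⟩
      · exact ⟨1, 0, 2, rfl, rfl, by decide, by decide⟩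
      · exact ⟨2, 1, 0, rfl, rfl, by decide, by decide⟩
      · exact absurd rfl huv
      · exact ⟨0, 1, 2, rfl, rfl, by decide, by decide⟩
      · exact ⟨1, 2, 0, rfl, rfl, by decide, by decide⟩
      · exact ⟨0, 2, 1, rfl, rfl, by decide, by decide⟩
      · exact absurd rfl huv
    · rintro ⟨h, -⟩; exact h
  · -- optimal solutions
    set xI : Fin 3 → ℚ := fun j => if j = 0 then 1 else 0 with hxI
    have hxImem : xI ∈ mipSet (fun i j => if i = j then (0:ℚ) else 1)
        (fun _ => 2 - δ) Finset.univ := by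
      refine ⟨?_, ?_, ?_⟩
      · intro i
        fin_cases i <;> simp [xI, Fin.sum_univ_three] <;> linarith
      · intro j; show (0:ℚ) ≤ if j = 0 then 1 else 0
        by_cases h : j = 0 <;> simp [h]
      · intro j _
        refine ⟨if j = 0 then 1 else 0, ?_⟩
        show (if j = 0 then (1:ℚ) else 0) = _
        by_cases h : j = 0 <;> simp [h]
    have hdotI : dotp (fun _ => (1:ℚ)) xI = 1 := by
      simp [dotp, xI, Fin.sum_univ_three]
    refine ⟨xI, subset_convexHull ℚ _ hxImem, ?_, ?_⟩
    · -- optimality over the integer hull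
      intro x hx
      rw [hdotI]
      have := convexHull_min (s := mipSet (fun i j => if i = j then (0:ℚ) else 1)
          (fun _ => 2 - δ) Finset.univ)
          (t := {x : Fin 3 → ℚ | dotp (fun _ => (1:ℚ)) x ≤ 1}) ?_
          (convex_dotp_le _ _) hx
      · exact this
      · intro y hy
        obtain ⟨hAy, hy0, hyint⟩ := hy
        obtain ⟨z0, hz0⟩ := hyint 0 (Finset.mem_univ _)
        obtain ⟨z1, hz1⟩ := hyint 1 (Finset.mem_univ _)
        obtain ⟨z2, hz2⟩ := hyint 2 (Finset.mem_univ _)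
        have h0 := hAy 0
        have h1 := hAy 1
        have h2 := hAy 2
        norm_num [Fin.sum_univ_three, hz0, hz1, hz2, Fin.ext_iff] at h0 h1 h2
        have e01 : z1 + z2 ≤ 1 := by
          have : ((z1 + z2 : ℤ) : ℚ) < 2 := by push_cast; linarith
          have := (by exact_mod_cast this : (z1 + z2 : ℤ) < 2)
          omega
        have e02 : z0 + z2 ≤ 1 := by
          have : ((z0 + z2 : ℤ) : ℚ) < 2 := by push_cast; linarith
          have := (by exact_mod_cast this : (z0 + z2 : ℤ) < 2)
          omega
        have e12 : z0 + z1 ≤ 1 := by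
          have : ((z0 + z1 : ℤ) : ℚ) < 2 := by push_cast; linarith
          have := (by exact_mod_cast this : (z0 + z1 : ℤ) < 2)
          omega
        have hsum : z0 + z1 + z2 ≤ 1 := by omega
        simp only [Set.mem_setOf_eq, dotp, Fin.sum_univ_three, one_mul]
        rw [hz0, hz1, hz2]
        exact_mod_cast hsum
    · -- point in the super sparse closure
      set xS : Fin 3 → ℚ := fun _ => 1 - δ/2 with hxS
      have hxSnn : (0:ℚ) ≤ 1 - δ/2 := by linarith
      refine ⟨xS, ?_, ?_⟩
      · simp only [superSparseClosure, Set.mem_iInter]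
        intro u
        unfold blockClosure sparseClosure
        constructor
        · refine ⟨?_, fun j => hxSnn⟩
          intro i
          fin_cases i <;> simp [xS, Fin.sum_univ_three] <;> linarith
        · simp only [Set.mem_iInter]
          rintro α β ⟨hvalid, hsupp⟩
          have hαz : ∀ j, j ≠ u → α j = 0 := by
            intro j hj
            by_contra hne
            have := hsupp j hne
            simp only [id_eq, Set.mem_setOf_eq, Finset.mem_singleton] at this
            exact hj this
          have hdS : dotp α xS = α u * (1 - δ/2) := by
            rw [dotp]
            rw [Finset.sum_eq_single u]
            · intro j _ hj; rw [hαz j hj, zero_mul]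
            · intro h; exact absurd (Finset.mem_univ u) h
          have h0mem : (0 : Fin 3 → ℚ) ∈ intHull (fun i j => if i = j then (0:ℚ) else 1)
              (fun _ => 2 - δ) Finset.univ := by
            refine subset_convexHull ℚ _ ⟨?_, ?_, ?_⟩
            · intro i
              show (∑ j, (if i = j then (0:ℚ) else 1) * (0 : Fin 3 → ℚ) j) ≤ 2 - δ
              simp only [Pi.zero_apply, mul_zero, Finset.sum_const_zero]; linarith
            · intro j; exact le_refl 0
            · intro j _; exact ⟨0, rfl⟩
          have heu : (fun j => if j = u then (1:ℚ) else 0) ∈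
              intHull (fun i j => if i = j then (0:ℚ) else 1)
              (fun _ => 2 - δ) Finset.univ := by
            refine subset_convexHull ℚ _ ⟨?_, ?_, ?_⟩
            · intro i
              show (∑ j, (if i = j then (0:ℚ) else 1) * (if j = u then (1:ℚ) else 0))
                  ≤ 2 - δ
              have hkey : ∑ j, (if i = j then (0:ℚ) else 1) * (if j = u then (1:ℚ) else 0)
                  = if i = u then 0 else 1 := by
                rw [Finset.sum_eq_single u]
                · by_cases h : i = u <;> simp [h]
                · intro j _ hj; simp [hj]
                · intro h; exact absurd (Finset.mem_univ u) h
              rw [hkey]; by_cases h : i = u <;> simp [h] <;> linarith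
            · intro j; show (0:ℚ) ≤ if j = u then 1 else 0
              by_cases h : j = u <;> simp [h]
            · intro j _
              refine ⟨if j = u then 1 else 0, ?_⟩
              show (if j = u then (1:ℚ) else 0) = _
              by_cases h : j = u <;> simp [h]
          have hβ0 : 0 ≤ β := by
            have := hvalid 0 h0mem
            simpa [dotp] using this
          have hβu : α u ≤ β := by
            have := hvalid _ heu
            rw [dotp, Finset.sum_eq_single u] at this
            · simpa using this
            · intro j _ hj; simp [hj]
            · intro h; exact absurd (Finset.mem_univ u) h
          simp only [Set.mem_setOf_eq]
          rw [hdS]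
          rcases le_or_gt (α u) 0 with h | h
          · nlinarith
          · nlinarith
      · have hdSval : dotp (fun _ => (1:ℚ)) xS = 3 * (1 - δ/2) := by
          simp only [dotp, xS, Fin.sum_univ_three, one_mul]; ring
        rw [hdotI, hdSval]
        linarith
end

section
/- Consider a packing integer program (P) and a partition J of the column index set of A such that the packing interaction graph G^{pack}_{A,J} is a tree with maximum degree Δ ≥ 1. Then the natural sparse closure optimum satisfies z^{N.S.} ≤ ((2Δ − 1)/Δ) · z^I. -/
open Finset

open SimpleGraph in
lemma tree_parent {V : Type*} [DecidableEq V] {G : SimpleGraph V} (ht : G.IsTree) (r : V) :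
    ∃ (pa : V → V) (dep : V → ℕ),
      pa r = r ∧
      (∀ v, v ≠ r → G.Adj v (pa v) ∧ dep (pa v) + 1 = dep v) ∧
      (∀ a b, G.Adj a b → (a ≠ r ∧ pa a = b) ∨ (b ≠ r ∧ pa b = a)) := by
  classical
  have huniq : ∀ {u v : V} (p q : G.Walk u v), p.IsPath → q.IsPath → p = q := by
    intro u v p q hp hq
    exact congrArg Subtype.val (ht.IsAcyclic.path_unique ⟨p, hp⟩ ⟨q, hq⟩)
  have hex : ∀ v : V, ∃ p : G.Walk v r, p.IsPath := by
    intro v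
    obtain ⟨p, hp, -⟩ := ht.existsUnique_path v r
    exact ⟨p, hp⟩
  set pth : (v : V) → G.Walk v r := fun v => (hex v).choose with hpth_def
  have hpth : ∀ v, (pth v).IsPath := fun v => (hex v).choose_spec
  have hnilr : pth r = Walk.nil := huniq _ _ (hpth r) (Walk.IsPath.nil)
  have hlenr : ∀ v, v = r → (pth v).length = 0 := by
    intro v hv; subst hv; rw [hnilr]; rfl
  refine ⟨fun v => (pth v).getVert 1, fun v => (pth v).length, ?_, ?_, ?_⟩
  · show (pth r).getVert 1 = r
    rw [hnilr]; rfl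
  · intro v hv
    have hlen : (pth v).length ≠ 0 := fun h => hv (SimpleGraph.Walk.eq_of_length_eq_zero h)
    have hnn : ¬ (pth v).Nil := by rw [SimpleGraph.Walk.nil_iff_length_eq]; exact hlen
    constructor
    · show G.Adj v ((pth v).getVert 1)
      have := (pth v).adj_getVert_succ (i := 0) (Nat.pos_of_ne_zero hlen)
      simpa using this
    · show (pth ((pth v).getVert 1)).length + 1 = (pth v).length
      have htail : (pth v).tail.IsPath := (hpth v).tail
      have heq : pth ((pth v).getVert 1) = (pth v).tail := huniq _ _ (hpth _) htail
      rw [heq]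
      exact SimpleGraph.Walk.length_tail_add_one hnn
  · intro a b hadj
    by_cases hmem : a ∈ (pth b).support
    · right
      have htk : ((pth b).takeUntil a hmem).IsPath := (hpth b).takeUntil hmem
      have hedge : (Walk.cons hadj.symm Walk.nil : G.Walk b a).IsPath := by
        rw [SimpleGraph.Walk.cons_isPath_iff]
        exact ⟨Walk.IsPath.nil, by simp [hadj.ne']⟩
      have he : (pth b).takeUntil a hmem = Walk.cons hadj.symm Walk.nil := huniq _ _ htk hedge
      have hspec := (pth b).take_spec hmem
      rw [he, SimpleGraph.Walk.cons_append, SimpleGraph.Walk.nil_append] at hspec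
      have hblen : (pth b).length ≠ 0 := by
        rw [← hspec, SimpleGraph.Walk.length_cons]; simp
      refine ⟨fun hbr => hblen (hlenr b hbr), ?_⟩
      show (pth b).getVert 1 = a
      rw [← hspec, SimpleGraph.Walk.getVert_cons_succ, SimpleGraph.Walk.getVert_zero]
    · left
      have hcons : (Walk.cons hadj (pth b)).IsPath := by
        rw [SimpleGraph.Walk.cons_isPath_iff]; exact ⟨hpth b, hmem⟩
      have ha : pth a = Walk.cons hadj (pth b) := huniq _ _ (hpth a) hcons
      have halen : (pth a).length ≠ 0 := by
        rw [ha, SimpleGraph.Walk.length_cons]; simp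
      refine ⟨fun har => halen (hlenr a har), ?_⟩
      show (pth a).getVert 1 = b
      rw [ha, SimpleGraph.Walk.getVert_cons_succ, SimpleGraph.Walk.getVert_zero]

lemma slot_assignment {V : Type*} [Fintype V] [DecidableEq V]
    (r : V) (pa : V → V) (dep : V → ℕ) (Δ : ℕ) (hΔ : 1 ≤ Δ)
    (hdep : ∀ v, v ≠ r → dep (pa v) < dep v)
    (hchr : (Finset.univ.filter (fun w => pa w = r ∧ w ≠ r)).card ≤ Δ)
    (hch : ∀ u, u ≠ r → (Finset.univ.filter (fun w => pa w = u ∧ w ≠ r)).card + 1 ≤ Δ) :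
    ∃ (C : V → Finset ℕ) (P : V → ℕ),
      (∀ v, C v ⊆ Finset.range (2*Δ-1) ∧ (C v).card = Δ) ∧
      (∀ v, v ≠ r → P v ∈ C (pa v) ∧ P v ≠ P (pa v) ∧ P v ∈ C v ∧
        C v \ {P v} = Finset.range (2*Δ-1) \ C (pa v)) ∧
      (∀ v w, v ≠ r → w ≠ r → pa v = pa w → v ≠ w → P v ≠ P w) ∧
      P r = 2*Δ-1 := by
  classical
  set K := 2*Δ-1 with hK
  have hΔK : Δ ≤ K := by omega
  set ch : V → Finset V := fun u => Finset.univ.filter (fun w => pa w = u ∧ w ≠ r) with hch_def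
  set pickP : V → (Finset ℕ × ℕ) → V → ℕ := fun u pd =>
    if h : ∃ g : V → ℕ, Set.InjOn g (ch u) ∧ ∀ w ∈ ch u, g w ∈ pd.1 \ {pd.2}
    then h.choose else (fun _ => 0) with hpickP_def
  have wf : WellFounded (fun a b : V => dep a < dep b) :=
    InvImage.wf dep (wellFounded_lt)
  set F : (v : V) → ((w : V) → dep w < dep v → Finset ℕ × ℕ) → Finset ℕ × ℕ :=
    fun v rec =>
      if h : v = r then (Finset.range Δ, K)
      else
        ((Finset.range K \ (rec (pa v) (hdep v h)).1) ∪
          {pickP (pa v) (rec (pa v) (hdep v h)) v},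
         pickP (pa v) (rec (pa v) (hdep v h)) v) with hF_def
  set Φ : V → Finset ℕ × ℕ := wf.fix F with hΦ_def
  have hfix : ∀ v, Φ v =
      if h : v = r then (Finset.range Δ, K)
      else ((Finset.range K \ (Φ (pa v)).1) ∪ {pickP (pa v) (Φ (pa v)) v},
            pickP (pa v) (Φ (pa v)) v) := by
    intro v
    exact wf.fix_eq F v
  -- generic: the pick-existential holds whenever we know the basic facts about `Φ u`
  have hEgen : ∀ u : V, (Φ u).1 ⊆ Finset.range K → (Φ u).1.card = Δ →
      (u = r → (Φ u).2 = K) → (u ≠ r → (Φ u).2 ∈ (Φ u).1) →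
      ∃ g : V → ℕ, Set.InjOn g (ch u) ∧ ∀ w ∈ ch u, g w ∈ (Φ u).1 \ {(Φ u).2} := by
    intro u hsub hcard hroot hmem
    have hchcard : (ch u).card ≤ ((Φ u).1 \ {(Φ u).2}).card := by
      by_cases hur : u = r
      · have hnm : (Φ u).2 ∉ (Φ u).1 := by
          rw [hroot hur]
          intro hmm
          have := Finset.mem_range.mp (hsub hmm)
          omega
        rw [Finset.sdiff_singleton_eq_erase, Finset.erase_eq_of_notMem hnm, hcard]
        have h1 := hchr
        have h2 : ch u = Finset.univ.filter (fun w => pa w = r ∧ w ≠ r) := by rw [hch_def, hur]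
        rw [h2]; exact h1
      · rw [Finset.sdiff_singleton_eq_erase, Finset.card_erase_of_mem (hmem hur), hcard]
        have h1 := hch u hur
        have h2 : ch u = Finset.univ.filter (fun w => pa w = u ∧ w ≠ r) := by rw [hch_def]
        rw [h2]; omega
    have hne : Nonempty ((ch u : Finset V) ↪ ((Φ u).1 \ {(Φ u).2} : Finset ℕ)) := by
      rw [Function.Embedding.nonempty_iff_card_le, Fintype.card_coe, Fintype.card_coe]
      exact hchcard
    obtain ⟨e⟩ := hne
    refine ⟨fun w => if hw : w ∈ ch u then (e ⟨w, hw⟩ : ℕ) else 0, ?_, ?_⟩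
    · intro w hw w' hw' heq
      have hw1 : w ∈ ch u := hw
      have hw2 : w' ∈ ch u := hw'
      simp only [dif_pos hw1, dif_pos hw2] at heq
      have := e.injective (Subtype.ext heq)
      exact congrArg Subtype.val this
    · intro w hw
      simp only [dif_pos hw]
      exact (e ⟨w, hw⟩).2
  have main : ∀ v : V, (Φ v).1 ⊆ Finset.range K ∧ (Φ v).1.card = Δ ∧
      (v = r → (Φ v).2 = K) ∧
      (v ≠ r → (Φ v).2 ∈ (Φ (pa v)).1 \ {(Φ (pa v)).2} ∧
        (Φ v).1 = (Finset.range K \ (Φ (pa v)).1) ∪ {(Φ v).2}) := by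
    intro v
    induction v using wf.induction with
    | _ v IH =>
      by_cases hv : v = r
      · rw [hfix v, dif_pos hv]
        exact ⟨by simpa using Finset.range_subset_range.mpr hΔK, by simp, fun _ => rfl,
          fun h => absurd hv h⟩
      · obtain ⟨hsub, hcard, hroot, hformula⟩ := IH (pa v) (hdep v hv)
        have hpamem : pa v ≠ r → (Φ (pa v)).2 ∈ (Φ (pa v)).1 := by
          intro hpr
          obtain ⟨-, h2⟩ := hformula hpr
          rw [h2]; simp
        have hexg := hEgen (pa v) hsub hcard hroot hpamem
        have hP : (Φ v).2 = hexg.choose v := by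
          rw [hfix v, dif_neg hv]
          simp only [hpickP_def]
          rw [dif_pos hexg]
        have hvch : v ∈ ch (pa v) := by simp [hch_def, hv]
        have hPmem : (Φ v).2 ∈ (Φ (pa v)).1 \ {(Φ (pa v)).2} := by
          rw [hP]; exact hexg.choose_spec.2 v hvch
        have hCv : (Φ v).1 = (Finset.range K \ (Φ (pa v)).1) ∪ {(Φ v).2} := by
          conv_lhs => rw [hfix v, dif_neg hv]
          congr 1
          rw [hP]
          simp only [hpickP_def]
          rw [dif_pos hexg]
        refine ⟨?_, ?_, fun h => absurd h hv, fun _ => ⟨hPmem, hCv⟩⟩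
        · rw [hCv]
          apply Finset.union_subset (Finset.sdiff_subset)
          simp only [Finset.singleton_subset_iff]
          exact hsub (Finset.mem_sdiff.mp hPmem).1
        · rw [hCv]
          have hdisj : Disjoint (Finset.range K \ (Φ (pa v)).1) {(Φ v).2} := by
            simp only [Finset.disjoint_singleton_right, Finset.mem_sdiff, not_and, not_not]
            intro _; exact (Finset.mem_sdiff.mp hPmem).1
          rw [Finset.card_union_of_disjoint hdisj, Finset.card_sdiff_of_subset hsub, Finset.card_range,
            hcard, Finset.card_singleton]
          omega
  have hEall : ∀ u : V, ∃ g : V → ℕ, Set.InjOn g (ch u) ∧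
      ∀ w ∈ ch u, g w ∈ (Φ u).1 \ {(Φ u).2} := by
    intro u
    obtain ⟨h1, h2, h3, h4⟩ := main u
    refine hEgen u h1 h2 h3 ?_
    intro hur
    obtain ⟨-, hf⟩ := h4 hur
    rw [hf]; simp
  have hPch : ∀ v : V, v ≠ r → (Φ v).2 = (hEall (pa v)).choose v := by
    intro v hv
    rw [hfix v, dif_neg hv]
    simp only [hpickP_def]
    rw [dif_pos (hEall (pa v))]
  refine ⟨fun v => (Φ v).1, fun v => (Φ v).2, ?_, ?_, ?_, (main r).2.2.1 rfl⟩
  · intro v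
    obtain ⟨h1, h2, -, -⟩ := main v
    exact ⟨h1, h2⟩
  · intro v hv
    obtain ⟨-, -, -, h4⟩ := main v
    obtain ⟨hPmem, hf⟩ := h4 hv
    have hP1 : (Φ v).2 ∈ (Φ (pa v)).1 := (Finset.mem_sdiff.mp hPmem).1
    have hP2 : (Φ v).2 ≠ (Φ (pa v)).2 := by
      have := (Finset.mem_sdiff.mp hPmem).2
      simpa using this
    refine ⟨hP1, hP2, by show (Φ v).2 ∈ (Φ v).1; rw [hf]; simp, ?_⟩
    show (Φ v).1 \ {(Φ v).2} = Finset.range K \ (Φ (pa v)).1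
    rw [hf, Finset.union_sdiff_right, Finset.sdiff_singleton_eq_erase,
      Finset.erase_eq_of_notMem]
    simp only [Finset.mem_sdiff, not_and, not_not]
    intro _; exact hP1
  · intro v w hv hw hpw hvw
    have h1 := hPch v hv
    have h2 := hPch w hw
    rw [← hpw] at h2
    show (Φ v).2 ≠ (Φ w).2
    rw [h1, h2]
    intro heq
    have hvch : v ∈ ch (pa v) := by simp [hch_def, hv]
    have hwch : w ∈ ch (pa v) := by simp [hch_def, hw, hpw]
    exact hvw ((hEall (pa v)).choose_spec.1 hvch hwch heq)

lemma cut_bound {m n q : ℕ}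
    (A : Matrix (Fin m) (Fin n) ℚ) (b : Fin m → ℚ) (c : Fin n → ℚ) (L : Finset (Fin n))
    (hA : ∀ i j, 0 ≤ A i j) (hb : ∀ i, 0 ≤ b i) (hc : ∀ j, 0 ≤ c j)
    (π : Fin n → Fin q)
    (xI : Fin n → ℚ) (hxImax : ∀ y ∈ intHull A b L, dotp c y ≤ dotp c xI)
    (hz0 : 0 ≤ dotp c xI)
    (x : Fin n → ℚ) (hx : x ∈ naturalSparseClosure A b L π)
    (M : Finset (Finset (Fin q)))
    (hsupp : ∀ S ∈ M, ∃ i : Fin m, ∀ u ∈ S, ∃ j', π j' = u ∧ A i j' ≠ 0)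
    (hdisj : ∀ S ∈ M, ∀ T ∈ M, S ≠ T → Disjoint S T)
    (hnadj : ∀ S ∈ M, ∀ T ∈ M, S ≠ T → ∀ u ∈ S, ∀ w ∈ T, ¬ (packGraph A π).Adj u w) :
    ∑ S ∈ M, ∑ j, (if π j ∈ S then c j * x j else 0) ≤ dotp c xI := by
  classical
  set z := dotp c xI with hzdef
  set al : Finset (Fin q) → (Fin n → ℚ) := fun S j => if π j ∈ S then c j else 0 with hal
  have hgs : ∀ (S : Finset (Fin q)) (v : Fin n → ℚ),
      dotp (al S) v = ∑ j, (if π j ∈ S then c j * v j else 0) := by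
    intro S v
    unfold dotp
    apply Finset.sum_congr rfl
    intro j _
    simp only [hal]
    by_cases h : π j ∈ S <;> simp [h]
  have hlin : ∀ α : Fin n → ℚ, IsLinearMap ℚ (dotp α) := by
    intro α
    constructor
    · intro u v; unfold dotp; rw [← Finset.sum_add_distrib]
      apply Finset.sum_congr rfl; intro j _; simp [Pi.add_apply, mul_add]
    · intro t u; unfold dotp
      simp only [Pi.smul_apply, smul_eq_mul, Finset.mul_sum]
      apply Finset.sum_congr rfl; intro j _; ring
  have hcut : ∀ S ∈ M, ∀ β : ℚ, (∀ y ∈ mipSet A b L, dotp (al S) y ≤ β) →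
      dotp (al S) x ≤ β := by
    intro S hS β hvalid
    obtain ⟨i, hi⟩ := hsupp S hS
    have hhull : ∀ y ∈ intHull A b L, dotp (al S) y ≤ β := by
      intro y hy
      exact convexHull_min hvalid (convex_halfSpace_le (hlin (al S)) β) hy
    have hxi := Set.mem_iInter.mp hx i
    have hx2 := hxi.2
    have hmem := Set.mem_iInter.mp (Set.mem_iInter.mp (Set.mem_iInter.mp hx2 (al S)) β)
    apply hmem
    refine ⟨hhull, ?_⟩
    intro j hj
    have hjS : π j ∈ S := by
      by_contra hn
      simp only [hal, if_neg hn] at hj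
      exact hj rfl
    obtain ⟨j', hj'1, hj'2⟩ := hi (π j) hjS
    exact ⟨j', hj'1, hj'2⟩
  by_contra hlt
  push_neg at hlt
  have hMne : M.Nonempty := by
    rcases Finset.eq_empty_or_nonempty M with h | h
    · subst h; simp at hlt; linarith
    · exact h
  set tot := ∑ S ∈ M, ∑ j, (if π j ∈ S then c j * x j else 0) with htot
  set δ : ℚ := (tot - z) / M.card with hδdef
  have hcard : (0:ℚ) < M.card := by
    have := Finset.card_pos.mpr hMne
    exact_mod_cast this
  have hδ : 0 < δ := by
    apply div_pos _ hcard
    linarith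
  have happrox : ∀ S ∈ M, ∃ y, y ∈ mipSet A b L ∧ dotp (al S) x - δ < dotp (al S) y := by
    intro S hS
    by_contra hno
    push_neg at hno
    have : ∀ y ∈ mipSet A b L, dotp (al S) y ≤ dotp (al S) x - δ := by
      intro y hy; exact hno y hy
    have := hcut S hS _ this
    linarith
  choose! y hy1 hy2 using happrox
  set w : Fin n → ℚ := fun j => ∑ S ∈ M, (if π j ∈ S then y S j else 0) with hwdef
  have hwmip : w ∈ mipSet A b L := by
    refine ⟨?_, ?_, ?_⟩
    · intro i
      have hswap : ∑ j, A i j * w j = ∑ S ∈ M, ∑ j, A i j * (if π j ∈ S then y S j else 0) := by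
        simp only [hwdef]
        rw [Finset.sum_comm (f := fun S j => A i j * (if π j ∈ S then y S j else 0))]
        apply Finset.sum_congr rfl
        intro j _
        rw [Finset.mul_sum]
      rw [hswap]
      by_cases hex : ∃ S₀ ∈ M, ∃ j₀, π j₀ ∈ S₀ ∧ A i j₀ ≠ 0
      · obtain ⟨S₀, hS₀, j₀, hj₀, hAj₀⟩ := hex
        have hone : ∑ S ∈ M, ∑ j, A i j * (if π j ∈ S then y S j else 0)
            = ∑ j, A i j * (if π j ∈ S₀ then y S₀ j else 0) := by
          apply Finset.sum_eq_single_of_mem S₀ hS₀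
          intro T hT hTne
          apply Finset.sum_eq_zero
          intro j _
          by_cases hπj : π j ∈ T
          · by_cases hAj : A i j = 0
            · rw [hAj, zero_mul]
            · exfalso
              have hne : π j ≠ π j₀ := by
                intro heq
                have := Finset.disjoint_left.mp (hdisj T hT S₀ hS₀ hTne) hπj
                rw [heq] at hπj
                exact (Finset.disjoint_left.mp (hdisj T hT S₀ hS₀ hTne) hπj) hj₀
              have hadj : (packGraph A π).Adj (π j) (π j₀) :=
                ⟨hne, i, j, j₀, rfl, rfl, hAj, hAj₀⟩
              exact hnadj T hT S₀ hS₀ hTne (π j) hπj (π j₀) hj₀ hadj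
          · rw [if_neg hπj, mul_zero]
        rw [hone]
        calc ∑ j, A i j * (if π j ∈ S₀ then y S₀ j else 0)
            ≤ ∑ j, A i j * y S₀ j := by
              apply Finset.sum_le_sum
              intro j _
              by_cases hπj : π j ∈ S₀
              · rw [if_pos hπj]
              · rw [if_neg hπj, mul_zero]
                exact mul_nonneg (hA i j) ((hy1 S₀ hS₀).2.1 j)
          _ ≤ b i := (hy1 S₀ hS₀).1 i
      · push_neg at hex
        have : ∑ S ∈ M, ∑ j, A i j * (if π j ∈ S then y S j else 0) = 0 := by
          apply Finset.sum_eq_zero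
          intro S hS
          apply Finset.sum_eq_zero
          intro j _
          by_cases hπj : π j ∈ S
          · rw [hex S hS j hπj, zero_mul]
          · rw [if_neg hπj, mul_zero]
        rw [this]; exact hb i
    · intro j
      apply Finset.sum_nonneg
      intro S hS
      by_cases hπj : π j ∈ S
      · rw [if_pos hπj]; exact (hy1 S hS).2.1 j
      · rw [if_neg hπj]
    · intro j hj
      have hint : ∀ S ∈ M, ∃ zz : ℤ, (if π j ∈ S then y S j else 0) = (zz : ℚ) := by
        intro S hS
        by_cases hπj : π j ∈ S
        · obtain ⟨zz, hzz⟩ := (hy1 S hS).2.2 j hj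
          exact ⟨zz, by rw [if_pos hπj]; exact hzz⟩
        · exact ⟨0, by rw [if_neg hπj]; simp⟩
      refine ⟨∑ S ∈ M.attach, (hint S.1 S.2).choose, ?_⟩
      rw [Int.cast_sum]
      simp only [hwdef]
      rw [← Finset.sum_attach M (fun S => if π j ∈ S then y S j else 0)]
      apply Finset.sum_congr rfl
      intro S _
      exact (hint S.1 S.2).choose_spec
  have hle : dotp c w ≤ z := hxImax w (subset_convexHull ℚ _ hwmip)
  have heq : dotp c w = ∑ S ∈ M, dotp (al S) (y S) := by
    unfold dotp
    have : ∀ S : Finset (Fin q), ∑ j, al S j * y S j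
        = ∑ j, (if π j ∈ S then c j * y S j else 0) := fun S => by
      apply Finset.sum_congr rfl
      intro j _
      simp only [hal]
      by_cases h : π j ∈ S <;> simp [h]
    rw [Finset.sum_congr rfl (fun S _ => this S)]
    rw [Finset.sum_comm]
    apply Finset.sum_congr rfl
    intro j _
    simp only [hwdef]
    rw [Finset.mul_sum]
    apply Finset.sum_congr rfl
    intro S _
    by_cases h : π j ∈ S <;> simp [h]
  have hstrict : ∑ S ∈ M, (dotp (al S) x - δ) < ∑ S ∈ M, dotp (al S) (y S) := by
    apply Finset.sum_lt_sum_of_nonempty hMne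
    intro S hS
    exact hy2 S hS
  have hsumlhs : ∑ S ∈ M, (dotp (al S) x - δ) = tot - M.card * δ := by
    rw [Finset.sum_sub_distrib, Finset.sum_const, nsmul_eq_mul]
    congr 1
    apply Finset.sum_congr rfl
    intro S _
    exact hgs S x
  have hcancel : (M.card : ℚ) * δ = tot - z := by
    rw [hδdef]
    field_simp
  rw [hsumlhs, hcancel] at hstrict
  rw [heq] at hle
  linarith

/-- **Theorem (natural sparse closure of trees).** If the packing interaction graph is a
tree with maximum degree `Δ ≥ 1`, then `z^{N.S.} ≤ ((2Δ - 1)/Δ) · z^I`. -/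
theorem packing_naturalSparse_tree_bound
    {m n q : ℕ}
    (A : Matrix (Fin m) (Fin n) ℚ) (b : Fin m → ℚ) (c : Fin n → ℚ) (L : Finset (Fin n))
    (hA : ∀ i j, 0 ≤ A i j) (hb : ∀ i, 0 ≤ b i) (hc : ∀ j, 0 ≤ c j)
    (π : Fin n → Fin q) (hπ : Function.Surjective π)
    (htree : (packGraph A π).IsTree)
    (Δ : ℕ) (hΔ : 1 ≤ Δ)
    (hdegle : ∀ v, ((packGraph A π).neighborSet v).ncard ≤ Δ)
    (hdegeq : ∃ v, ((packGraph A π).neighborSet v).ncard = Δ)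
    (xI : Fin n → ℚ) (hxI : xI ∈ intHull A b L)
    (hxImax : ∀ x ∈ intHull A b L, dotp c x ≤ dotp c xI) :
    ∀ x ∈ naturalSparseClosure A b L π,
      dotp c x ≤ ((2 * (Δ : ℚ) - 1) / (Δ : ℚ)) * dotp c xI := by
  intro x hx
  classical
  set G := packGraph A π with hGdef
  obtain ⟨v₀, hv₀⟩ := hdegeq
  set r := v₀ with hrdef
  -- every vertex has a neighbor
  have hv₀n : (G.neighborSet v₀).Nonempty :=
    Set.nonempty_of_ncard_ne_zero (by rw [hv₀]; omega)
  obtain ⟨w₀, hw₀⟩ := hv₀n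
  have hnb : ∀ u : Fin q, ∃ v, G.Adj u v := by
    intro u
    by_cases hu : u = v₀
    · exact ⟨w₀, by rw [hu]; exact hw₀⟩
    · obtain ⟨p⟩ := htree.isConnected.preconnected u v₀
      have hlen : p.length ≠ 0 := fun h => hu (SimpleGraph.Walk.eq_of_length_eq_zero h)
      refine ⟨p.getVert 1, ?_⟩
      have := p.adj_getVert_succ (i := 0) (Nat.pos_of_ne_zero hlen)
      simpa using this
  have htouch : ∀ u : Fin q, ∃ i : Fin m, ∃ j', π j' = u ∧ A i j' ≠ 0 := by
    intro u
    obtain ⟨v, hadj⟩ := hnb u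
    obtain ⟨-, i, a₁, a₂, h1, h2, h3, h4⟩ := hadj
    exact ⟨i, a₁, h1, h3⟩
  obtain ⟨i₀, -⟩ := htouch v₀
  have hxlp : x ∈ lpSet A b := (Set.mem_iInter.mp hx i₀).1
  have hx0 : ∀ j, 0 ≤ x j := hxlp.2
  have h0mip : (0 : Fin n → ℚ) ∈ mipSet A b L := by
    refine ⟨fun i => by simpa using hb i, fun j => le_refl _, fun j _ => ⟨0, by simp⟩⟩
  have hz0 : 0 ≤ dotp c xI := by
    have h := hxImax 0 (subset_convexHull ℚ _ h0mip)
    have h2 : dotp c 0 = 0 := by simp [dotp]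
    linarith
  -- rooted tree structure
  obtain ⟨pa, dep, hparr, hpa, hadjpa⟩ := tree_parent htree r
  -- children
  set ch : Fin q → Finset (Fin q) :=
    fun u => Finset.univ.filter (fun w => pa w = u ∧ w ≠ r) with hchdef
  have hchadj : ∀ u, ∀ w ∈ ch u, G.Adj u w := by
    intro u w hw
    simp only [hchdef, Finset.mem_filter] at hw
    obtain ⟨-, h1, h2⟩ := hw
    have := (hpa w h2).1
    rw [h1] at this
    exact this.symm
  have hpane : ∀ u, u ≠ r → pa u ∉ ch u := by
    intro u hu hmem
    simp only [hchdef, Finset.mem_filter] at hmem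
    obtain ⟨-, h1, h2⟩ := hmem
    have e1 := (hpa u hu).2
    have e2 := (hpa (pa u) h2).2
    rw [h1] at e2
    omega
  have hchsub : ∀ u, ((ch u : Finset (Fin q)) : Set (Fin q)) ⊆ G.neighborSet u := by
    intro u w hw
    exact hchadj u w hw
  have hchcard : ∀ u, (ch u).card ≤ Δ := by
    intro u
    have h1 := Set.ncard_le_ncard (hchsub u) (Set.toFinite _)
    rw [Set.ncard_coe_finset] at h1
    exact le_trans h1 (hdegle u)
  have hchcard' : ∀ u, u ≠ r → (ch u).card + 1 ≤ Δ := by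
    intro u hu
    have hins : ((insert (pa u) (ch u) : Finset (Fin q)) : Set (Fin q)) ⊆ G.neighborSet u := by
      intro w hw
      rw [Finset.coe_insert] at hw
      rcases Set.mem_insert_iff.mp hw with rfl | hw
      · exact (hpa u hu).1
      · exact hchadj u w hw
    have h1 := Set.ncard_le_ncard hins (Set.toFinite _)
    rw [Set.ncard_coe_finset, Finset.card_insert_of_notMem (hpane u hu)] at h1
    have := hdegle u
    omega
  have hdep : ∀ v, v ≠ r → dep (pa v) < dep v := by
    intro v hv
    have := (hpa v hv).2
    omega
  -- slot assignment
  obtain ⟨C, P, hC1, hC2, hC3, hPr⟩ :=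
    slot_assignment r pa dep Δ hΔ hdep (hchcard r) (fun u hu => hchcard' u hu)
  set K := 2*Δ-1 with hKdef
  -- derived slot facts
  have hPC : ∀ v, v ≠ r → P v ∈ C v := fun v hv => (hC2 v hv).2.2.1
  have hPCp : ∀ v, v ≠ r → P v ∈ C (pa v) := fun v hv => (hC2 v hv).1
  have hPne : ∀ v, v ≠ r → P v ≠ P (pa v) := fun v hv => (hC2 v hv).2.1
  have hPg : ∀ w, w ≠ r → pa w ≠ r → P w ∉ C (pa (pa w)) := by
    intro w hw hpw hmem
    have h1 : P w ∈ C (pa w) \ {P (pa w)} :=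
      Finset.mem_sdiff.mpr ⟨hPCp w hw, by simp [hPne w hw]⟩
    rw [(hC2 (pa w) hpw).2.2.2] at h1
    exact (Finset.mem_sdiff.mp h1).2 hmem
  -- the X sets
  set X : Fin q → Finset ℕ :=
    fun v => (C v) \ (insert (P v) ((ch v).image P)) with hXdef
  have hXC : ∀ v, ∀ t ∈ X v, t ∈ C v := by
    intro v t ht
    rw [hXdef] at ht
    exact (Finset.mem_sdiff.mp ht).1
  have hXP : ∀ v, ∀ t ∈ X v, t ≠ P v := by
    intro v t ht heq
    rw [hXdef] at ht
    exact (Finset.mem_sdiff.mp ht).2 (by simp [heq])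
  have hXch : ∀ v, ∀ t ∈ X v, ∀ cc ∈ ch v, t ≠ P cc := by
    intro v t ht cc hcc heq
    rw [hXdef] at ht
    refine (Finset.mem_sdiff.mp ht).2 ?_
    rw [Finset.mem_insert]
    exact Or.inr (Finset.mem_image.mpr ⟨cc, hcc, heq.symm⟩)
  have hXg : ∀ w, w ≠ r → ∀ t ∈ X w, t ∉ C (pa w) := by
    intro w hw t ht hmem
    have h1 : t ∈ C w \ {P w} := Finset.mem_sdiff.mpr ⟨hXC w t ht, by simp [hXP w t ht]⟩
    rw [(hC2 w hw).2.2.2] at h1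
    exact (Finset.mem_sdiff.mp h1).2 hmem
  -- core separation facts
  have hVV : ∀ v w, v ≠ r → w ≠ r → P v = P w → v ≠ w →
      v ≠ pa w ∧ ¬ G.Adj v w ∧ ¬ G.Adj v (pa w) ∧ pa v ≠ pa w := by
    intro v w hv hw hP hvw
    have hvpw : v ≠ pa w := by
      intro heq
      exact hPne w hw (by rw [← heq, ← hP])
    have hpvw : pa v ≠ pa w := by
      intro heq
      exact hC3 v w hv hw heq hvw hP
    refine ⟨hvpw, ?_, ?_, hpvw⟩
    · intro hadj
      rcases hadjpa v w hadj with ⟨-, h1⟩ | ⟨-, h1⟩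
      · exact hPne v hv (by rw [h1, ← hP])
      · exact hvpw h1.symm
    · intro hadj
      rcases hadjpa v (pa w) hadj with ⟨-, h1⟩ | ⟨hpwr, h1⟩
      · exact hpvw h1
      · refine hPg w hw hpwr ?_
        rw [h1, ← hP]
        exact hPC v hv
  have hVVpp : ∀ v w, v ≠ r → w ≠ r → P v = P w → v ≠ w → ¬ G.Adj (pa v) (pa w) := by
    intro v w hv hw hP hvw hadj
    rcases hadjpa (pa v) (pa w) hadj with ⟨hpvr, h1⟩ | ⟨hpwr, h1⟩
    · refine hPg v hv hpvr ?_
      rw [h1, hP]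
      exact hPCp w hw
    · refine hPg w hw hpwr ?_
      rw [h1, ← hP]
      exact hPCp v hv
  have hVX : ∀ v w, v ≠ r → ∀ s, P v = s → s ∈ X w →
      w ≠ pa v ∧ w ≠ v ∧ ¬ G.Adj w v ∧ ¬ G.Adj w (pa v) := by
    intro v w hv s hPv hsX
    have hwv : w ≠ v := by
      intro heq
      exact hXP w s hsX (by rw [heq, hPv])
    have hwpv : w ≠ pa v := by
      intro heq
      refine hXch w s hsX v ?_ (by rw [hPv])
      simp only [hchdef, Finset.mem_filter]
      exact ⟨Finset.mem_univ v, heq.symm, hv⟩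
    refine ⟨hwpv, hwv, ?_, ?_⟩
    · intro hadj
      rcases hadjpa w v hadj with ⟨hwr, h1⟩ | ⟨-, h1⟩
      · refine hXg w hwr s hsX ?_
        rw [h1, ← hPv]
        exact hPC v hv
      · exact hwpv h1.symm
    · intro hadj
      rcases hadjpa w (pa v) hadj with ⟨hwr, h1⟩ | ⟨hpvr, h1⟩
      · refine hXg w hwr s hsX ?_
        rw [h1, ← hPv]
        exact hPCp v hv
      · refine hPg v hv hpvr ?_
        rw [h1, hPv]
        exact hXC w s hsX
  have hXX : ∀ s v w, s ∈ X v → s ∈ X w → v ≠ w → ¬ G.Adj v w := by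
    intro s v w hsv hsw hvw hadj
    rcases hadjpa v w hadj with ⟨hvr, h1⟩ | ⟨hwr, h1⟩
    · refine hXg v hvr s hsv ?_
      rw [h1]
      exact hXC w s hsw
    · refine hXg w hwr s hsw ?_
      rw [h1]
      exact hXC v s hsv
  -- the mixed stable sets
  set Ms : ℕ → Finset (Finset (Fin q)) := fun s =>
    ((Finset.univ.filter (fun v => v ≠ r ∧ P v = s)).image (fun v => ({pa v, v} : Finset (Fin q)))) ∪
    ((Finset.univ.filter (fun v => s ∈ X v)).image (fun v => ({v} : Finset (Fin q)))) with hMsdef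
  have hMsmem : ∀ s S, S ∈ Ms s →
      (∃ v, v ≠ r ∧ P v = s ∧ S = ({pa v, v} : Finset (Fin q))) ∨
      (∃ v, s ∈ X v ∧ S = ({v} : Finset (Fin q))) := by
    intro s S hS
    rw [hMsdef] at hS
    rcases Finset.mem_union.mp hS with h | h
    · obtain ⟨v, hv, hveq⟩ := Finset.mem_image.mp h
      obtain ⟨-, h1, h2⟩ := Finset.mem_filter.mp hv
      exact Or.inl ⟨v, h1, h2, hveq.symm⟩
    · obtain ⟨v, hv, hveq⟩ := Finset.mem_image.mp h
      obtain ⟨-, h1⟩ := Finset.mem_filter.mp hv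
      exact Or.inr ⟨v, h1, hveq.symm⟩
  have hsep : ∀ s, ∀ S ∈ Ms s, ∀ T ∈ Ms s, S ≠ T →
      Disjoint S T ∧ ∀ u ∈ S, ∀ w ∈ T, ¬ G.Adj u w := by
    intro s S hS T hT hST
    rcases hMsmem s S hS with ⟨v, hv, hPv, rfl⟩ | ⟨v, hsv, rfl⟩ <;>
      rcases hMsmem s T hT with ⟨w, hw, hPw, rfl⟩ | ⟨w, hsw, rfl⟩
    · -- edge / edge
      have hvw : v ≠ w := by
        intro heq
        exact hST (by rw [heq])
      have hP : P v = P w := by rw [hPv, hPw]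
      obtain ⟨h1, h2, h3, h4⟩ := hVV v w hv hw hP hvw
      obtain ⟨h1', h2', h3', h4'⟩ := hVV w v hw hv hP.symm hvw.symm
      have hpp := hVVpp v w hv hw hP hvw
      constructor
      · rw [Finset.disjoint_left]
        intro a ha hb
        simp only [Finset.mem_insert, Finset.mem_singleton] at ha hb
        rcases ha with rfl | rfl <;> rcases hb with h | h
        · exact h4 h
        · exact h1' h.symm
        · exact h1 h
        · exact hvw h
      · intro a ha b hb
        simp only [Finset.mem_insert, Finset.mem_singleton] at ha hb
        rcases ha with rfl | rfl <;> rcases hb with rfl | rfl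
        · exact hpp
        · exact fun h => h3' h.symm
        · exact h3
        · exact h2
    · -- edge / singleton
      obtain ⟨k1, k2, k3, k4⟩ := hVX v w hv s hPv hsw
      constructor
      · rw [Finset.disjoint_left]
        intro a ha hb
        simp only [Finset.mem_insert, Finset.mem_singleton] at ha hb
        subst hb
        rcases ha with h | h
        · exact k1 h
        · exact k2 h
      · intro a ha b hb
        simp only [Finset.mem_insert, Finset.mem_singleton] at ha hb
        subst hb
        rcases ha with rfl | rfl
        · exact fun h => k4 h.symm
        · exact fun h => k3 h.symm
    · -- singleton / edge
      obtain ⟨k1, k2, k3, k4⟩ := hVX w v hw s hPw hsv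
      constructor
      · rw [Finset.disjoint_left]
        intro a ha hb
        simp only [Finset.mem_insert, Finset.mem_singleton] at ha hb
        subst ha
        rcases hb with h | h
        · exact k1 h
        · exact k2 h
      · intro a ha b hb
        simp only [Finset.mem_insert, Finset.mem_singleton] at ha hb
        subst ha
        rcases hb with rfl | rfl
        · exact k4
        · exact k3
    · -- singleton / singleton
      have hvw : v ≠ w := by
        intro heq
        exact hST (by rw [heq])
      constructor
      · rw [Finset.disjoint_left]
        intro a ha hb
        simp only [Finset.mem_singleton] at ha hb
        subst ha
        exact hvw hb
      · intro a ha b hb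
        simp only [Finset.mem_singleton] at ha hb
        rw [ha, hb]
        exact hXX s v w hsv hsw hvw
  -- support rows for parts
  have hsupp : ∀ s, ∀ S ∈ Ms s, ∃ i : Fin m, ∀ u ∈ S, ∃ j', π j' = u ∧ A i j' ≠ 0 := by
    intro s S hS
    rcases hMsmem s S hS with ⟨v, hv, hPv, rfl⟩ | ⟨v, hsv, rfl⟩
    · have hadj : G.Adj v (pa v) := (hpa v hv).1
      obtain ⟨-, i, a₁, a₂, h1, h2, h3, h4⟩ := hadj
      refine ⟨i, ?_⟩
      intro u hu
      simp only [Finset.mem_insert, Finset.mem_singleton] at hu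
      rcases hu with rfl | rfl
      · exact ⟨a₂, h2, h4⟩
      · exact ⟨a₁, h1, h3⟩
    · obtain ⟨i, j', hj1, hj2⟩ := htouch v
      refine ⟨i, ?_⟩
      intro u hu
      simp only [Finset.mem_singleton] at hu
      subst hu
      exact ⟨j', hj1, hj2⟩
  -- f values
  set f : Fin q → ℚ := fun u => ∑ j, (if π j = u then c j * x j else 0) with hfdef
  have hf0 : ∀ u, 0 ≤ f u := by
    intro u
    apply Finset.sum_nonneg
    intro j _
    by_cases h : π j = u
    · rw [if_pos h]; exact mul_nonneg (hc j) (hx0 j)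
    · rw [if_neg h]
  have hfS : ∀ S : Finset (Fin q), ∑ u ∈ S, f u = ∑ j, (if π j ∈ S then c j * x j else 0) := by
    intro S
    rw [hfdef]
    rw [Finset.sum_comm]
    apply Finset.sum_congr rfl
    intro j _
    rw [Finset.sum_ite_eq]
  -- per-slot bound
  have hslot : ∀ s, ∑ v ∈ Finset.univ.filter (fun v => s ∈ C v), f v ≤ dotp c xI := by
    intro s
    have hcover : Finset.univ.filter (fun v => s ∈ C v) ⊆ (Ms s).biUnion id := by
      intro v hv
      have hsv : s ∈ C v := (Finset.mem_filter.mp hv).2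
      rw [Finset.mem_biUnion]
      by_cases h1 : ∃ cc ∈ ch v, P cc = s
      · obtain ⟨cc, hcc, hPcc⟩ := h1
        have hcc' : pa cc = v ∧ cc ≠ r := by
          simpa only [hchdef, Finset.mem_filter, Finset.mem_univ, true_and] using hcc
        have hccr : cc ≠ r := hcc'.2
        have hccpa : pa cc = v := hcc'.1
        refine ⟨({pa cc, cc} : Finset (Fin q)), ?_, ?_⟩
        · rw [hMsdef]
          apply Finset.mem_union_left
          apply Finset.mem_image_of_mem
          simp [hccr, hPcc]
        · simp [id, hccpa]
      · by_cases h2 : v ≠ r ∧ P v = s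
        · refine ⟨({pa v, v} : Finset (Fin q)), ?_, ?_⟩
          · rw [hMsdef]
            apply Finset.mem_union_left
            apply Finset.mem_image_of_mem
            simp [h2.1, h2.2]
          · simp [id]
        · have hsX : s ∈ X v := by
            rw [hXdef]
            rw [Finset.mem_sdiff]
            refine ⟨hsv, ?_⟩
            rw [Finset.mem_insert]
            push_neg
            constructor
            · -- s ≠ P v
              intro heq
              by_cases hvr : v = r
              · rw [hvr] at heq
                rw [hPr] at heq
                have := Finset.mem_range.mp ((hC1 v).1 hsv)
                rw [hKdef] at this
                omega
              · exact h2 ⟨hvr, heq.symm⟩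
            · intro hmem
              obtain ⟨cc, hcc, hPcc⟩ := Finset.mem_image.mp hmem
              exact h1 ⟨cc, hcc, hPcc⟩
          refine ⟨({v} : Finset (Fin q)), ?_, ?_⟩
          · rw [hMsdef]
            apply Finset.mem_union_right
            apply Finset.mem_image_of_mem
            simp [hsX]
          · simp [id]
    have hpd : ((Ms s : Finset (Finset (Fin q))) : Set (Finset (Fin q))).PairwiseDisjoint id := by
      intro S hS T hT hST
      exact (hsep s S hS T hT hST).1
    calc ∑ v ∈ Finset.univ.filter (fun v => s ∈ C v), f v
        ≤ ∑ v ∈ (Ms s).biUnion id, f v := by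
          apply Finset.sum_le_sum_of_subset_of_nonneg hcover
          intro i _ _
          exact hf0 i
      _ = ∑ S ∈ Ms s, ∑ u ∈ S, f u := Finset.sum_biUnion hpd
      _ = ∑ S ∈ Ms s, ∑ j, (if π j ∈ S then c j * x j else 0) :=
          Finset.sum_congr rfl (fun S _ => hfS S)
      _ ≤ dotp c xI := by
          apply cut_bound A b c L hA hb hc π xI hxImax hz0 x hx (Ms s) (hsupp s)
          · intro S hS T hT hST
            exact (hsep s S hS T hT hST).1
          · intro S hS T hT hST
            exact (hsep s S hS T hT hST).2
  -- summing over slots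
  have hdot : dotp c x = ∑ v, f v := by
    rw [hfdef]
    unfold dotp
    rw [Finset.sum_comm]
    apply Finset.sum_congr rfl
    intro j _
    rw [Finset.sum_ite_eq]
    simp
  have hKbound : (Δ : ℚ) * dotp c x ≤ (K : ℚ) * dotp c xI := by
    have hmain : ∑ s ∈ Finset.range K, ∑ v ∈ Finset.univ.filter (fun v => s ∈ C v), f v
        = (Δ : ℚ) * dotp c x := by
      have hswap : ∑ s ∈ Finset.range K, ∑ v ∈ Finset.univ.filter (fun v => s ∈ C v), f v
          = ∑ v, ∑ s ∈ Finset.range K, (if s ∈ C v then f v else 0) := by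
        rw [Finset.sum_comm]
        apply Finset.sum_congr rfl
        intro s _
        rw [Finset.sum_filter]
      rw [hswap]
      have hinner : ∀ v : Fin q, ∑ s ∈ Finset.range K, (if s ∈ C v then f v else 0)
          = (Δ : ℚ) * f v := by
        intro v
        rw [← Finset.sum_filter]
        have hfil : (Finset.range K).filter (fun s => s ∈ C v) = C v := by
          ext a
          simp only [Finset.mem_filter, Finset.mem_range]
          constructor
          · exact fun h => h.2
          · intro h
            exact ⟨Finset.mem_range.mp ((hC1 v).1 h), h⟩
        rw [hfil, Finset.sum_const, (hC1 v).2, nsmul_eq_mul]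
      rw [Finset.sum_congr rfl (fun v _ => hinner v), ← Finset.mul_sum, hdot]
    calc (Δ : ℚ) * dotp c x
        = ∑ s ∈ Finset.range K, ∑ v ∈ Finset.univ.filter (fun v => s ∈ C v), f v := hmain.symm
      _ ≤ ∑ s ∈ Finset.range K, dotp c xI :=
          Finset.sum_le_sum (fun s _ => hslot s)
      _ = (K : ℚ) * dotp c xI := by
          rw [Finset.sum_const, Finset.card_range, nsmul_eq_mul]
  have hKcast : (K : ℚ) = 2 * (Δ : ℚ) - 1 := by
    rw [hKdef]
    have h1 : (1:ℕ) ≤ 2*Δ := by omega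
    push_cast [Nat.cast_sub h1]
    ring
  have hΔpos : (0:ℚ) < (Δ : ℚ) := by exact_mod_cast hΔ
  rw [div_mul_eq_mul_div, le_div_iff₀ hΔpos]
  rw [hKcast] at hKbound
  nlinarith [hKbound]
end

section
/- For every constant M > 0 there exists a covering integer program (C) and a partition J = {J_1, J_2} of its column index set [n] such that z^I > M · z^{S.S.}, where z^{S.S.} is the optimal value of min c^T x over P^{(J_1)} ∩ P^{(J_2)} and z^I is the integer optimal value. -/
open Finset

/-- The feasible region `P` of the covering MILP `Ax ≥ b`, `x ≥ 0`, `x_j ∈ ℤ` for `j ∈ L`. -/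
def covSet {m n : ℕ} (A : Matrix (Fin m) (Fin n) ℚ) (b : Fin m → ℚ)
    (L : Finset (Fin n)) : Set (Fin n → ℚ) :=
  {x | (∀ i, b i ≤ ∑ j, A i j * x j) ∧ (∀ j, 0 ≤ x j) ∧ ∀ j ∈ L, ∃ z : ℤ, x j = (z : ℚ)}

/-- The LP relaxation `P^LP` of the covering MILP. -/
def covLp {m n : ℕ} (A : Matrix (Fin m) (Fin n) ℚ) (b : Fin m → ℚ) : Set (Fin n → ℚ) :=
  {x | (∀ i, b i ≤ ∑ j, A i j * x j) ∧ (∀ j, 0 ≤ x j)}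

/-- The integer hull `P^I = conv(P)`. -/
def covHull {m n : ℕ} (A : Matrix (Fin m) (Fin n) ℚ) (b : Fin m → ℚ)
    (L : Finset (Fin n)) : Set (Fin n → ℚ) :=
  convexHull ℚ (covSet A b L)

/-- The sparse closure `P^(N)`: the LP relaxation intersected with all halfspaces
`αᵀx ≤ β` that are valid for `P^I` and whose support is contained in `N`. -/
def covSparseClosure {m n : ℕ} (A : Matrix (Fin m) (Fin n) ℚ) (b : Fin m → ℚ)
    (L : Finset (Fin n)) (N : Set (Fin n)) : Set (Fin n → ℚ) :=
  covLp A b ∩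
    ⋂ (α : Fin n → ℚ) (β : ℚ)
      (_ : (∀ x ∈ covHull A b L, dotp α x ≤ β) ∧ ∀ j, α j ≠ 0 → j ∈ N),
      {x | dotp α x ≤ β}

/-- The covering interaction graph of `A` w.r.t. the partition of the rows given by
`ρ : Fin m → Fin p` (part `I_u = ρ⁻¹(u)`): nodes `u ≠ v` are adjacent iff some column of
`A` has nonzero entries in a row of `I_u` and in a row of `I_v`. -/
def covGraph {m n p : ℕ} (A : Matrix (Fin m) (Fin n) ℚ) (ρ : Fin m → Fin p) :
    SimpleGraph (Fin p) where
  Adj u v := u ≠ v ∧ ∃ j i₁ i₂, ρ i₁ = u ∧ ρ i₂ = v ∧ A i₁ j ≠ 0 ∧ A i₂ j ≠ 0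
  symm := by
    constructor
    rintro u v ⟨huv, j, i₁, i₂, h1, h2, h3, h4⟩
    exact ⟨huv.symm, j, i₂, i₁, h2, h1, h4, h3⟩
  loopless := by
    constructor
    rintro u ⟨h, -⟩
    exact h rfl

/-- The sparse closure `P^(S)` for a set `S` of nodes of the covering interaction graph:
cuts supported on the union of the supports of the rows in the parts of `S`. -/
def covRowClosure {m n p : ℕ} (A : Matrix (Fin m) (Fin n) ℚ) (b : Fin m → ℚ)
    (L : Finset (Fin n)) (ρ : Fin m → Fin p) (S : Finset (Fin p)) : Set (Fin n → ℚ) :=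
  covSparseClosure A b L {j | ∃ i, ρ i ∈ S ∧ A i j ≠ 0}

/-- The row block-sparse closure `P^{𝒱,C} = ⋂_{S ∈ 𝒱} P^(S)` for a row support list `𝒱`. -/
def covListClosure {m n p : ℕ} (A : Matrix (Fin m) (Fin n) ℚ) (b : Fin m → ℚ)
    (L : Finset (Fin n)) (ρ : Fin m → Fin p) (𝒱 : Finset (Finset (Fin p))) :
    Set (Fin n → ℚ) :=
  ⋂ S ∈ 𝒱, covRowClosure A b L ρ S

/-- **Theorem (super sparse cuts can be arbitrarily bad for covering).** For every `M > 0`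
there is a covering integer program and a partition `{J₁, J₂}` of its columns (given by a
surjection `π : [n] → Fin 2`) such that `z^I > M · z^{S.S.}`, where `z^{S.S.}` is the
optimum over `P^(J₁) ∩ P^(J₂)`. -/
theorem covering_superSparse_arbitrarily_bad (M : ℚ) (hM : 0 < M) :
    ∃ (m n : ℕ) (A : Matrix (Fin m) (Fin n) ℚ) (b : Fin m → ℚ) (c : Fin n → ℚ)
      (L : Finset (Fin n)) (π : Fin n → Fin 2),
      (∀ i j, 0 ≤ A i j) ∧ (∀ i, 0 ≤ b i) ∧ (∀ j, 0 ≤ c j) ∧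
      Function.Surjective π ∧
      ∃ xI ∈ covHull A b L,
        (∀ x ∈ covHull A b L, dotp c xI ≤ dotp c x) ∧
        ∃ xS ∈ ⋂ u : Fin 2, covSparseClosure A b L {j | π j = u},
          (∀ x ∈ ⋂ u : Fin 2, covSparseClosure A b L {j | π j = u},
            dotp c xS ≤ dotp c x) ∧
          M * dotp c xS < dotp c xI := by
  classical
  set ε : ℚ := (min M⁻¹ 1) / 2 with hεdef
  have hε0 : 0 < ε := by
    have : 0 < min M⁻¹ 1 := lt_min (by positivity) one_pos
    positivity
  have hε1 : ε ≤ 1 := by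
    have : min M⁻¹ 1 ≤ 1 := min_le_right _ _
    rw [hεdef]; linarith
  have hMε : M * ε < 1 := by
    have h1 : M * ε ≤ M * (M⁻¹ / 2) := by
      apply mul_le_mul_of_nonneg_left _ hM.le
      have : min M⁻¹ 1 ≤ M⁻¹ := min_le_left _ _
      rw [hεdef]; linarith
    have h2 : M * (M⁻¹ / 2) = 1 / 2 := by
      field_simp
    linarith
  refine ⟨1, 2, fun _ _ => 1, fun _ => ε, fun _ => 1, Finset.univ, id,
    fun _ _ => zero_le_one, fun _ => hε0.le, fun _ => zero_le_one,
    Function.surjective_id, ?_⟩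
  set A : Matrix (Fin 1) (Fin 2) ℚ := fun _ _ => 1 with hA
  set b : Fin 1 → ℚ := fun _ => ε with hb
  set c : Fin 2 → ℚ := fun _ => 1 with hc
  have hdot : ∀ x : Fin 2 → ℚ, dotp c x = x 0 + x 1 := by
    intro x; simp [dotp, Fin.sum_univ_two, hc]
  -- integer points in covSet
  have hmem : ∀ (k l : ℕ), 0 < k + l → (![(k : ℚ), (l : ℚ)] : Fin 2 → ℚ) ∈
      covSet A b Finset.univ := by
    intro k l hkl
    refine ⟨?_, ?_, ?_⟩
    · intro i
      simp only [hA, hb, hc, Fin.sum_univ_two, one_mul]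
      have h1 : (1 : ℚ) ≤ (k : ℚ) + (l : ℚ) := by exact_mod_cast hkl
      simp only [Matrix.cons_val_zero, Matrix.cons_val_one, Matrix.head_cons]
      linarith
    · intro j
      fin_cases j <;> simp
    · intro j _
      fin_cases j
      · exact ⟨(k : ℤ), by simp⟩
      · exact ⟨(l : ℤ), by simp⟩
  have hmemhull : ∀ (k l : ℕ), 0 < k + l → (![(k : ℚ), (l : ℚ)] : Fin 2 → ℚ) ∈
      covHull A b Finset.univ := fun k l h =>
    subset_convexHull ℚ _ (hmem k l h)
  -- integer optimum xI = (1,0)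
  refine ⟨![1, 0], ?_, ?_, ?_⟩
  · have := hmemhull 1 0 (by norm_num)
    simpa using this
  · -- lower bound 1 on the hull
    intro x hx
    have hlin : IsLinearMap ℚ (dotp c) := by
      constructor
      · intro x y; simp [dotp, mul_add, Finset.sum_add_distrib]
      · intro a x; simp [dotp, Finset.mul_sum, Pi.smul_apply, smul_eq_mul]; ring_nf
    have hconv : Convex ℚ {x : Fin 2 → ℚ | 1 ≤ dotp c x} :=
      convex_halfSpace_ge hlin 1
    have hsub : covSet A b Finset.univ ⊆ {x : Fin 2 → ℚ | 1 ≤ dotp c x} := by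
      rintro y ⟨hcons, hnn, hint⟩
      obtain ⟨z0, hz0⟩ := hint 0 (Finset.mem_univ _)
      obtain ⟨z1, hz1⟩ := hint 1 (Finset.mem_univ _)
      have h1 : ε ≤ y 0 + y 1 := by
        have := hcons 0
        simpa [hA, hb, hc, Fin.sum_univ_two] using this
      have hpos : (0 : ℚ) < (z0 + z1 : ℤ) := by
        push_cast
        rw [← hz0, ← hz1]; linarith
      have : (1 : ℤ) ≤ z0 + z1 := by exact_mod_cast hpos
      have : (1 : ℚ) ≤ (z0 : ℚ) + z1 := by exact_mod_cast this
      rw [Set.mem_setOf_eq, hdot, hz0, hz1]; exact this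
    have := convexHull_min hsub hconv hx
    have hxI : dotp c ![1, 0] = 1 := by rw [hdot]; norm_num
    rw [hxI]; exact this
  -- the super sparse point xS = (ε, 0)
  refine ⟨![ε, 0], ?_, ?_, ?_⟩
  · rw [Set.mem_iInter]
    intro u
    constructor
    · -- in the LP
      constructor
      · intro i
        simp only [hA, hb, hc, Fin.sum_univ_two, one_mul, Matrix.cons_val_zero,
          Matrix.cons_val_one, Matrix.head_cons]
        linarith
      · intro j; fin_cases j <;> simp [hε0.le]
    · -- satisfies all sparse cuts
      simp only [Set.mem_iInter, Set.mem_setOf_eq]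
      rintro α β ⟨hval, hsupp⟩
      fin_cases u
      · -- support ⊆ {0}, so α 1 = 0
        have hα1 : α 1 = 0 := by
          by_contra h
          have := hsupp 1 h
          simp at this
        have hβ0 : 0 ≤ β := by
          have := hval _ (hmemhull 0 1 (by norm_num))
          simpa [dotp, Fin.sum_univ_two, hα1] using this
        have hα0 : α 0 ≤ 0 := by
          by_contra h
          push_neg at h
          set N : ℕ := ⌈β / α 0⌉₊ + 1 with hN
          have hNval := hval _ (hmemhull N 1 (by omega))
          have hNval' : α 0 * N ≤ β := by
            simpa [dotp, Fin.sum_univ_two, hα1] using hNval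
          have hlt : β / α 0 < (N : ℚ) := by
            have h1 : β / α 0 ≤ (⌈β / α 0⌉₊ : ℚ) := Nat.le_ceil _
            have h2 : ((⌈β / α 0⌉₊ : ℕ) : ℚ) < (N : ℚ) := by
              exact_mod_cast Nat.lt_succ_self _
            linarith
          have : β < α 0 * N := by
            rw [div_lt_iff₀ h] at hlt; linarith
          linarith
        have : dotp α ![ε, 0] = α 0 * ε := by
          simp [dotp, Fin.sum_univ_two]
        rw [this]
        have : α 0 * ε ≤ 0 := mul_nonpos_of_nonpos_of_nonneg hα0 hε0.le
        linarith
      · -- support ⊆ {1}, so α 0 = 0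
        have hα0 : α 0 = 0 := by
          by_contra h
          have := hsupp 0 h
          simp at this
        have hβ0 : 0 ≤ β := by
          have := hval _ (hmemhull 1 0 (by norm_num))
          simpa [dotp, Fin.sum_univ_two, hα0] using this
        have : dotp α ![ε, 0] = 0 := by
          simp [dotp, Fin.sum_univ_two, hα0]
        rw [this]; exact hβ0
  · -- minimality over the intersection
    intro x hx
    rw [Set.mem_iInter] at hx
    obtain ⟨⟨hcons, hnn⟩, -⟩ := hx 0
    have h1 : ε ≤ x 0 + x 1 := by
      have := hcons 0
      simpa [hA, hb, hc, Fin.sum_univ_two] using this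
    have hxS : dotp c ![ε, 0] = ε := by rw [hdot]; norm_num
    rw [hxS, hdot]; linarith
  · -- the gap
    have hxS : dotp c ![ε, 0] = ε := by rw [hdot]; norm_num
    have hxI : dotp c ![1, 0] = 1 := by rw [hdot]; norm_num
    rw [hxS, hxI]; exact hMε
end

section
/- Let the optimization problem be max c^T x subject to Ax ≤ b, x_j ∈ ℤ_+ for j ∈ L, x_j ∈ ℝ_+ for j ∈ [n]∖L, with arbitrary A ∈ ℚ^{m×n}, b ∈ ℚ^m, and c ∈ ℚ_+^n. Let J be a partition of the column index set [n], let G^{pack}_{A,J} = (V,E) be the packing interaction graph, and let 𝒱 be a support list. If the instance is feasible, then z^{𝒱,P} ≤ (|V| + 1 − D_𝒱) · z^I, where D_𝒱 is the corrected average density of 𝒱. -/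
open Finset

/-- **Theorem (packing-type problems with arbitrary `A`).** Let the problem be
`max cᵀx, Ax ≤ b, x ≥ 0` (integrality on `L`) with arbitrary `A, b` and `c ≥ 0`.  If the
instance is feasible, then `z^{𝒱,P} ≤ (|V| + 1 - D_𝒱) · z^I`, where `D_𝒱` is the corrected
average density of the support list `𝒱`.  The corrected average density is encoded by a
subcollection `T ⊆ 𝒱` that covers all vertices and maximizes the average cardinality
`D(T) = (Σ_{S ∈ T} |S|)/|T|` among all covering subcollections, so `D_𝒱 = D(T)`. -/
theorem arbitrary_packing_listClosure_density_bound
    {m n q : ℕ}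
    (A : Matrix (Fin m) (Fin n) ℚ) (b : Fin m → ℚ) (c : Fin n → ℚ) (L : Finset (Fin n))
    (hc : ∀ j, 0 ≤ c j)
    (π : Fin n → Fin q) (hπ : Function.Surjective π)
    (hfeas : (mipSet A b L).Nonempty)
    (𝒱 : Finset (Finset (Fin q)))
    (T : Finset (Finset (Fin q))) (hT𝒱 : T ⊆ 𝒱)
    (hTcover : ∀ v : Fin q, ∃ S ∈ T, v ∈ S)
    (hTmax : ∀ W ⊆ 𝒱, (∀ v : Fin q, ∃ S ∈ W, v ∈ S) →
      (∑ S ∈ W, (S.card : ℚ)) / (W.card : ℚ) ≤ (∑ S ∈ T, (S.card : ℚ)) / (T.card : ℚ))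
    (xI : Fin n → ℚ) (hxI : xI ∈ intHull A b L)
    (hxImax : ∀ x ∈ intHull A b L, dotp c x ≤ dotp c xI) :
    ∀ x ∈ listClosure A b L π 𝒱,
      dotp c x ≤
        ((q : ℚ) + 1 - (∑ S ∈ T, (S.card : ℚ)) / (T.card : ℚ)) * dotp c xI := by
  intro x hx
  set z := dotp c xI with hzdef
  -- all points of the integer hull are nonnegative
  have hnonneg : ∀ y ∈ intHull A b L, ∀ j, 0 ≤ y j := by
    intro y hy
    have hsub : intHull A b L ⊆ {y : Fin n → ℚ | ∀ j, 0 ≤ y j} := by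
      apply convexHull_min
      · intro y hy j; exact hy.2.1 j
      · intro u hu v hv a b' ha hb' _ j
        exact add_nonneg (mul_nonneg ha (hu j)) (mul_nonneg hb' (hv j))
    exact hsub hy
  have hz0 : 0 ≤ z :=
    Finset.sum_nonneg fun j _ => mul_nonneg (hc j) (hnonneg xI hxI j)
  -- the basic cut lemma: restricting c to blocks inside some S ∈ 𝒱 gives a valid sparse cut
  have hcut : ∀ S ∈ 𝒱, ∀ (P : Fin n → Prop) (_ : DecidablePred P),
      (∀ j, P j → π j ∈ S) → (∑ j, if P j then c j * x j else 0) ≤ z := by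
    intro S hS P _ hP
    have hmem := Set.mem_iInter₂.mp hx S hS
    have hmem2 := hmem.2
    have h1 := Set.mem_iInter.mp hmem2 (fun j => if P j then c j else 0)
    have h2 := Set.mem_iInter.mp h1 z
    have hvalid : (∀ y ∈ intHull A b L,
        dotp (fun j => if P j then c j else 0) y ≤ z) ∧
        ∀ j, (if P j then c j else 0) ≠ 0 → j ∈ {j | π j ∈ S} := by
      constructor
      · intro y hy
        have hle : dotp (fun j => if P j then c j else 0) y ≤ dotp c y := by
          apply Finset.sum_le_sum
          intro j _
          by_cases h : P j
          · simp [h]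
          · simpa [h] using mul_nonneg (hc j) (hnonneg y hy j)
        exact hle.trans (hxImax y hy)
      · intro j hj
        by_cases h : P j
        · exact hP j h
        · simp [h] at hj
    have h3 := Set.mem_iInter.mp h2 hvalid
    calc (∑ j, if P j then c j * x j else 0)
        = dotp (fun j => if P j then c j else 0) x := by
          unfold dotp
          refine Finset.sum_congr rfl fun j _ => ?_
          by_cases h : P j <;> simp [h]
      _ ≤ z := h3
  -- the per-block contributions
  set y : Fin q → ℚ := fun v => ∑ j, if π j = v then c j * x j else 0 with hy
  have hyv : ∀ v : Fin q, y v ≤ z := by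
    intro v
    obtain ⟨S, hST, hvS⟩ := hTcover v
    exact hcut S (hT𝒱 hST) (fun j => π j = v) (fun j => inferInstance)
      (fun j hj => hj ▸ hvS)
  have hsum : dotp c x = ∑ v : Fin q, y v := by
    rw [hy]; unfold dotp
    rw [Finset.sum_comm]
    refine Finset.sum_congr rfl fun j _ => ?_
    rw [Finset.sum_ite_eq]
    simp
  -- T is nonempty (q = 0 case is degenerate)
  rcases T.eq_empty_or_nonempty with hTe | hTne
  · -- then Fin q is empty, hence Fin n is empty
    have hq : ∀ v : Fin q, False := by
      intro v
      obtain ⟨S, hS, _⟩ := hTcover v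
      simp [hTe] at hS
    have hn : ∀ j : Fin n, False := fun j => hq (π j)
    have hx0 : dotp c x = 0 := Finset.sum_eq_zero fun j _ => (hn j).elim
    have hz00 : z = 0 := Finset.sum_eq_zero fun j _ => (hn j).elim
    rw [hx0, hz00, mul_zero]
  · -- pick a member of T of maximal cardinality
    obtain ⟨S', hS'T, hS'max⟩ := T.exists_max_image (fun S => (S.card : ℚ)) hTne
    have hTcard : (0 : ℚ) < T.card := by
      exact_mod_cast Finset.card_pos.mpr hTne
    have hD : (∑ S ∈ T, (S.card : ℚ)) / (T.card : ℚ) ≤ (S'.card : ℚ) := by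
      rw [div_le_iff₀ hTcard]
      calc (∑ S ∈ T, (S.card : ℚ)) ≤ ∑ S ∈ T, (S'.card : ℚ) :=
            Finset.sum_le_sum fun S hS => hS'max S hS
        _ = (S'.card : ℚ) * T.card := by rw [Finset.sum_const, nsmul_eq_mul, mul_comm]
    -- the cut on S'
    have hScut : ∑ v ∈ S', y v ≤ z := by
      have h1 : ∑ v ∈ S', y v = ∑ j, if π j ∈ S' then c j * x j else 0 := by
        rw [hy, Finset.sum_comm]
        refine Finset.sum_congr rfl fun j _ => ?_
        exact Finset.sum_ite_eq S' (π j) _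
      rw [h1]
      exact hcut S' (hT𝒱 hS'T) (fun j => π j ∈ S') (fun j => inferInstance)
        (fun j hj => hj)
    -- the remaining blocks
    have hcompl : ∑ v ∈ S'ᶜ, y v ≤ (S'ᶜ.card : ℚ) * z := by
      calc ∑ v ∈ S'ᶜ, y v ≤ S'ᶜ.card • z :=
            Finset.sum_le_card_nsmul _ _ z fun v _ => hyv v
        _ = (S'ᶜ.card : ℚ) * z := nsmul_eq_mul _ _
    have hcardc : (S'ᶜ.card : ℚ) = (q : ℚ) - (S'.card : ℚ) := by
      have h1 : S'ᶜ.card = Fintype.card (Fin q) - S'.card := Finset.card_compl S'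
      have h2 : S'.card ≤ Fintype.card (Fin q) := Finset.card_le_univ S'
      rw [h1, Nat.cast_sub h2, Fintype.card_fin]
    have hmain : dotp c x ≤ (1 + ((q : ℚ) - (S'.card : ℚ))) * z := by
      rw [hsum, ← Finset.sum_add_sum_compl S' y]
      calc ∑ v ∈ S', y v + ∑ v ∈ S'ᶜ, y v ≤ z + (S'ᶜ.card : ℚ) * z :=
            add_le_add hScut hcompl
        _ = (1 + ((q : ℚ) - (S'.card : ℚ))) * z := by rw [hcardc]; ring
    refine hmain.trans ?_
    apply mul_le_mul_of_nonneg_right _ hz0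
    have := hD
    linarith
end

section
/- Let the optimization problem be max c^T x subject to Ax ≤ b, x_j ∈ ℤ_+ for j ∈ L, x_j ∈ ℝ_+ for j ∈ [n]∖L, with arbitrary A ∈ ℚ^{m×n}, b ∈ ℚ^m, and c ∈ ℚ_+^n. Let J be a partition of the column index set [n] and let G^{pack}_{A,J} = (V,E) be the packing interaction graph. If the instance is feasible, then for any support list 𝒱 covering all vertices, z^{𝒱,P} ≤ |V| · z^I. -/
open Finset

/-- **Corollary (packing-type problems with arbitrary `A`).** Let the problem be
`max cᵀx, Ax ≤ b, x ≥ 0` (integrality on `L`) with arbitrary `A, b` and `c ≥ 0`.  If the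
instance is feasible, then for any support list `𝒱` covering all vertices of the packing
interaction graph, `z^{𝒱,P} ≤ |V| · z^I`. -/
theorem arbitrary_packing_listClosure_card_bound
    {m n q : ℕ}
    (A : Matrix (Fin m) (Fin n) ℚ) (b : Fin m → ℚ) (c : Fin n → ℚ) (L : Finset (Fin n))
    (hc : ∀ j, 0 ≤ c j)
    (π : Fin n → Fin q) (hπ : Function.Surjective π)
    (hfeas : (mipSet A b L).Nonempty)
    (𝒱 : Finset (Finset (Fin q)))
    (hcover : ∀ v : Fin q, ∃ S ∈ 𝒱, v ∈ S)
    (xI : Fin n → ℚ) (hxI : xI ∈ intHull A b L)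
    (hxImax : ∀ x ∈ intHull A b L, dotp c x ≤ dotp c xI) :
    ∀ x ∈ listClosure A b L π 𝒱, dotp c x ≤ (q : ℚ) * dotp c xI := by
  intro x hx
  set β := dotp c xI with hβ
  have hnonneg : ∀ y ∈ intHull A b L, ∀ j, 0 ≤ y j := by
    intro y hy
    have hsub : intHull A b L ⊆ {y : Fin n → ℚ | ∀ j, 0 ≤ y j} := by
      apply convexHull_min
      · intro z hz j; exact hz.2.1 j
      · intro z hz w hw a b' ha hb' hab j
        exact add_nonneg (mul_nonneg ha (hz j)) (mul_nonneg hb' (hw j))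
    exact hsub hy
  have key : ∀ u : Fin q, dotp (fun j => if π j = u then c j else 0) x ≤ β := by
    intro u
    obtain ⟨S, hS, huS⟩ := hcover u
    have hxS : x ∈ blockClosure A b L π S := by
      have h := hx
      simp only [listClosure, Set.mem_iInter] at h
      exact h S hS
    have hcut : (∀ y ∈ intHull A b L, dotp (fun j => if π j = u then c j else 0) y ≤ β) ∧
        ∀ j, (if π j = u then c j else 0) ≠ 0 → j ∈ {j | π j ∈ S} := by
      constructor
      · intro y hy
        have h1 : dotp (fun j => if π j = u then c j else 0) y ≤ dotp c y := by
          apply Finset.sum_le_sum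
          intro j _
          by_cases h : π j = u
          · simp [h]
          · simp only [h, if_false, zero_mul]
            exact mul_nonneg (hc j) (hnonneg y hy j)
        exact h1.trans (hxImax y hy)
      · intro j hj
        by_cases h : π j = u
        · simp only [Set.mem_setOf_eq, h]; exact huS
        · simp [h] at hj
    have h2 := hxS.2
    simp only [Set.mem_iInter] at h2
    exact h2 (fun j => if π j = u then c j else 0) β hcut
  have hsum : dotp c x = ∑ u : Fin q, dotp (fun j => if π j = u then c j else 0) x := by
    unfold dotp
    rw [Finset.sum_comm]
    apply Finset.sum_congr rfl
    intro j _
    have : ∀ u : Fin q, (if π j = u then c j else 0) * x j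
        = if π j = u then c j * x j else 0 := by
      intro u; by_cases h : π j = u <;> simp [h]
    simp only [this]
    rw [Finset.sum_ite_eq]
    simp
  rw [hsum]
  calc ∑ u : Fin q, dotp (fun j => if π j = u then c j else 0) x
      ≤ ∑ _u : Fin q, β := Finset.sum_le_sum fun u _ => key u
    _ = (q : ℚ) * β := by simp [Finset.sum_const, mul_comm]
end

section
/- Let T = (V,E) be a tree with at least one edge and maximum degree Δ. Then there exist 2Δ − 1 sets of edges E_1,…,E_{2Δ−1} of T and 2Δ − 1 sets of nodes V_1,…,V_{2Δ−1} of T such that: (1) for each i ∈ [2Δ−1], the collection E_i ∪ V_i (viewing each edge as a 2-element set of vertices and each node as a singleton) is a mixed stable set for T subordinate to the collection of edges E; and (2) each node of T belongs to the sets of exactly Δ of the collections E_1 ∪ V_1, …, E_{2Δ−1} ∪ V_{2Δ−1}. -/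
open Finset

open SimpleGraph
set_option linter.unusedSectionVars false
set_option linter.unusedVariables false

namespace TreeMSS

variable {V : Type*} [Fintype V] [DecidableEq V]

lemma exists_closer (T : SimpleGraph V) (hc : T.Connected) (r v : V) (hv : v ≠ r) :
    ∃ u, T.Adj v u ∧ T.dist u r + 1 = T.dist v r := by
  have hr : T.Reachable v r := hc v r
  obtain ⟨p, hp⟩ := hr.exists_walk_length_eq_dist
  cases p with
  | nil => exact absurd rfl hv
  | @cons _ u _ h q =>
    refine ⟨u, h, ?_⟩
    have h1 : T.dist u r ≤ q.length := SimpleGraph.dist_le q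
    have h2 : T.dist v r ≤ T.dist v u + T.dist u r := hc.dist_triangle
    have h3 : T.dist v u ≤ 1 := SimpleGraph.dist_le (Walk.cons h Walk.nil)
    simp only [Walk.length_cons] at hp
    omega

noncomputable def parent (T : SimpleGraph V) (hc : T.Connected) (r v : V) : V :=
  if h : v = r then v else (exists_closer T hc r v h).choose

lemma parent_spec (T : SimpleGraph V) (hc : T.Connected) (r v : V) (hv : v ≠ r) :
    T.Adj v (parent T hc r v) ∧ T.dist (parent T hc r v) r + 1 = T.dist v r := by
  rw [parent, dif_neg hv]
  exact (exists_closer T hc r v hv).choose_spec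

lemma closer_unique (T : SimpleGraph V) (ht : T.IsTree) (r v : V) {u w : V}
    (hu : T.Adj v u) (hw : T.Adj v w)
    (hdu : T.dist u r + 1 = T.dist v r) (hdw : T.dist w r + 1 = T.dist v r) : u = w := by
  by_contra hne
  obtain ⟨pu, hpu⟩ := (ht.isConnected u r).exists_walk_length_eq_dist
  obtain ⟨pw, hpw⟩ := (ht.isConnected w r).exists_walk_length_eq_dist
  have h1 : (Walk.cons hu pu).IsPath := by
    apply Walk.isPath_of_length_eq_dist
    simp only [Walk.length_cons]
    omega
  have h2 : (Walk.cons hw pw).IsPath := by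
    apply Walk.isPath_of_length_eq_dist
    simp only [Walk.length_cons]
    omega
  have := ht.IsAcyclic.path_unique ⟨Walk.cons hu pu, h1⟩ ⟨Walk.cons hw pw, h2⟩
  have h3 : (Walk.cons hu pu) = (Walk.cons hw pw) := congrArg Subtype.val this
  have h4 : (Walk.cons hu pu).getVert 1 = (Walk.cons hw pw).getVert 1 := by rw [h3]
  exact hne (by simpa using h4)

lemma adj_dist_ne (T : SimpleGraph V) (ht : T.IsTree) (r : V) {u v : V} (h : T.Adj u v) :
    T.dist u r ≠ T.dist v r := by
  intro he
  obtain ⟨p, hp⟩ := (ht.isConnected u r).exists_walk_length_eq_dist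
  have hpp : p.IsPath := Walk.isPath_of_length_eq_dist p hp
  by_cases hv : v ∈ p.support
  · have hsplit := p.take_spec hv
    have hlen : (p.takeUntil v hv).length + (p.dropUntil v hv).length = p.length := by
      rw [← Walk.length_append, hsplit]
    have h1 : T.dist v r ≤ (p.dropUntil v hv).length := SimpleGraph.dist_le _
    have h2 : 1 ≤ (p.takeUntil v hv).length := by
      have := SimpleGraph.Reachable.pos_dist_of_ne (h.reachable) h.ne
      have := SimpleGraph.dist_le (p.takeUntil v hv)
      omega
    omega
  · have hpath : (Walk.cons h.symm p).IsPath := hpp.cons hv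
    obtain ⟨q, hq⟩ := (ht.isConnected v r).exists_walk_length_eq_dist
    have hqp : q.IsPath := Walk.isPath_of_length_eq_dist q hq
    have := ht.IsAcyclic.path_unique ⟨Walk.cons h.symm p, hpath⟩ ⟨q, hqp⟩
    have h3 : (Walk.cons h.symm p) = q := congrArg Subtype.val this
    have h4 : (Walk.cons h.symm p).length = q.length := by rw [h3]
    simp only [Walk.length_cons] at h4
    omega


lemma child_parent (T : SimpleGraph V) (ht : T.IsTree) (r : V) {p u : V}
    (hadj : T.Adj p u) (hd : T.dist u r = T.dist p r + 1) :
    parent T ht.isConnected r u = p := by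
  have hur : u ≠ r := by
    intro h; subst h
    simp [SimpleGraph.dist_self] at hd
  obtain ⟨h1, h2⟩ := parent_spec T ht.isConnected r u hur
  exact closer_unique T ht r u h1 hadj.symm h2 (by omega)

/-- classification of a neighbor: either a child or the parent -/
lemma neighbor_cases (T : SimpleGraph V) (ht : T.IsTree) (r : V) {v u : V} (h : T.Adj v u) :
    (T.dist u r = T.dist v r + 1) ∨
      (v ≠ r ∧ u = parent T ht.isConnected r v) := by
  have hne := adj_dist_ne T ht r h
  have h1 : T.dist u r ≤ T.dist v r + 1 := by
    have := ht.isConnected.dist_triangle (u := u) (v := v) (w := r)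
    have h3 : T.dist u v ≤ 1 := SimpleGraph.dist_le (Walk.cons h.symm Walk.nil)
    omega
  have h2 : T.dist v r ≤ T.dist u r + 1 := by
    have := ht.isConnected.dist_triangle (u := v) (v := u) (w := r)
    have h3 : T.dist v u ≤ 1 := SimpleGraph.dist_le (Walk.cons h Walk.nil)
    omega
  rcases Nat.lt_or_ge (T.dist v r) (T.dist u r) with hlt | hge
  · left; omega
  · right
    have hvr : v ≠ r := by
      intro hh; subst hh
      rw [SimpleGraph.dist_self] at hge hne
      omega
    refine ⟨hvr, ?_⟩
    exact (closer_unique T ht r v (parent_spec T ht.isConnected r v hvr).1 h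
      (parent_spec T ht.isConnected r v hvr).2 (by omega)).symm

open scoped Classical in
noncomputable def children (T : SimpleGraph V) (r p : V) : Finset V :=
  Finset.univ.filter (fun u => T.Adj p u ∧ T.dist u r = T.dist p r + 1)

lemma mem_children {T : SimpleGraph V} {r p u : V} :
    u ∈ children T r p ↔ T.Adj p u ∧ T.dist u r = T.dist p r + 1 := by
  simp [children]

noncomputable def pick {m : ℕ} (A : Finset (Fin m)) (C : Finset V) (i0 : Fin m) (v : V) :
    Fin m :=
  A.toList.getD (C.toList.idxOf v) i0

lemma pick_mem {m : ℕ} {A : Finset (Fin m)} {C : Finset V} {i0 : Fin m} {v : V}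
    (h : C.card ≤ A.card) (hv : v ∈ C) : pick A C i0 v ∈ A := by
  have hidx : C.toList.idxOf v < A.toList.length := by
    have : C.toList.idxOf v < C.toList.length :=
      List.idxOf_lt_length_iff.2 (Finset.mem_toList.2 hv)
    rw [Finset.length_toList] at this ⊢
    omega
  rw [pick, List.getD_eq_getElem A.toList i0 hidx]
  exact Finset.mem_toList.1 (A.toList.getElem_mem hidx)

lemma pick_inj {m : ℕ} {A : Finset (Fin m)} {C : Finset V} {i0 : Fin m} {u v : V}
    (h : C.card ≤ A.card) (hu : u ∈ C) (hv : v ∈ C)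
    (he : pick A C i0 u = pick A C i0 v) : u = v := by
  have hiu : C.toList.idxOf u < C.toList.length :=
    List.idxOf_lt_length_iff.2 (Finset.mem_toList.2 hu)
  have hiv : C.toList.idxOf v < C.toList.length :=
    List.idxOf_lt_length_iff.2 (Finset.mem_toList.2 hv)
  have hiu' : C.toList.idxOf u < A.toList.length := by
    rw [Finset.length_toList] at hiu ⊢; omega
  have hiv' : C.toList.idxOf v < A.toList.length := by
    rw [Finset.length_toList] at hiv ⊢; omega
  rw [pick, pick, List.getD_eq_getElem A.toList i0 hiu', List.getD_eq_getElem A.toList i0 hiv']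
    at he
  have : C.toList.idxOf u = C.toList.idxOf v :=
    (A.nodup_toList.getElem_inj_iff).1 he
  have := List.idxOf_inj (Finset.mem_toList.2 hu) |>.1 this
  exact this


noncomputable def g (T : SimpleGraph V) (hc : T.Connected) (r : V) {m : ℕ}
    (s0 : Finset (Fin m)) (i0 : Fin m) (v : V) : Finset (Fin m) × Fin m :=
  if h : v = r then (s0, i0)
  else
    let p := parent T hc r v
    let gp := g T hc r s0 i0 p
    let A : Finset (Fin m) := if p = r then gp.1 else gp.1 \ {gp.2}
    let e : Fin m := pick A (children T r p) i0 v
    (gp.1ᶜ ∪ {e}, e)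
termination_by T.dist v r
decreasing_by
  have := (parent_spec T hc r v h).2
  omega

lemma g_r (T : SimpleGraph V) (hc : T.Connected) (r : V) {m : ℕ}
    (s0 : Finset (Fin m)) (i0 : Fin m) : g T hc r s0 i0 r = (s0, i0) := by
  rw [g]; simp

lemma g_ne (T : SimpleGraph V) (hc : T.Connected) (r : V) {m : ℕ}
    (s0 : Finset (Fin m)) (i0 : Fin m) {v : V} (h : v ≠ r) :
    g T hc r s0 i0 v =
      ((g T hc r s0 i0 (parent T hc r v)).1ᶜ ∪
        {pick (if parent T hc r v = r then (g T hc r s0 i0 (parent T hc r v)).1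
            else (g T hc r s0 i0 (parent T hc r v)).1 \ {(g T hc r s0 i0 (parent T hc r v)).2})
          (children T r (parent T hc r v)) i0 v},
       pick (if parent T hc r v = r then (g T hc r s0 i0 (parent T hc r v)).1
            else (g T hc r s0 i0 (parent T hc r v)).1 \ {(g T hc r s0 i0 (parent T hc r v)).2})
          (children T r (parent T hc r v)) i0 v) := by
  conv_lhs => rw [g]
  simp [h]


noncomputable def SS (T : SimpleGraph V) (hc : T.Connected) (r : V) {m : ℕ}
    (s0 : Finset (Fin m)) (i0 : Fin m) (v : V) : Finset (Fin m) := (g T hc r s0 i0 v).1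

noncomputable def aa (T : SimpleGraph V) (hc : T.Connected) (r : V) {m : ℕ}
    (s0 : Finset (Fin m)) (i0 : Fin m) (v : V) : Fin m := (g T hc r s0 i0 v).2

noncomputable def AA (T : SimpleGraph V) (hc : T.Connected) (r : V) {m : ℕ}
    (s0 : Finset (Fin m)) (i0 : Fin m) (p : V) : Finset (Fin m) :=
  if p = r then SS T hc r s0 i0 p else SS T hc r s0 i0 p \ {aa T hc r s0 i0 p}

variable {T : SimpleGraph V} {hc : T.Connected} {r : V} {m : ℕ}
  {s0 : Finset (Fin m)} {i0 : Fin m}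

lemma SS_r : SS T hc r s0 i0 r = s0 := by rw [SS, g_r]

lemma aa_ne {v : V} (h : v ≠ r) :
    aa T hc r s0 i0 v =
      pick (AA T hc r s0 i0 (parent T hc r v)) (children T r (parent T hc r v)) i0 v := by
  rw [aa, g_ne T hc r s0 i0 h, AA, SS, aa]

lemma SS_ne {v : V} (h : v ≠ r) :
    SS T hc r s0 i0 v =
      (SS T hc r s0 i0 (parent T hc r v))ᶜ ∪ {aa T hc r s0 i0 v} := by
  conv_lhs => rw [SS, g_ne T hc r s0 i0 h]
  rw [aa_ne h, AA, SS, aa]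

lemma AA_subset {p : V} : AA T hc r s0 i0 p ⊆ SS T hc r s0 i0 p := by
  rw [AA]
  split
  · exact Finset.Subset.refl _
  · exact Finset.sdiff_subset

open scoped Classical in
lemma children_card_le {Δ : ℕ} (ht : T.IsTree)
    (hdeg : ∀ v : V, (Finset.univ.filter (fun u => T.Adj v u)).card ≤ Δ) (p : V) :
    (p = r → (children T r p).card ≤ Δ) ∧
    (p ≠ r → (children T r p).card ≤ Δ - 1) := by
  have hsub : children T r p ⊆ Finset.univ.filter (fun u => T.Adj p u) := by
    intro u hu
    simp only [Finset.mem_filter, Finset.mem_univ, true_and]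
    exact (mem_children.1 hu).1
  constructor
  · intro _
    exact le_trans (Finset.card_le_card hsub) (hdeg p)
  · intro hp
    have hpar := parent_spec T ht.isConnected r p hp
    have hmem : parent T ht.isConnected r p ∈ Finset.univ.filter (fun u => T.Adj p u) := by
      simp only [Finset.mem_filter, Finset.mem_univ, true_and]
      exact hpar.1
    have hsub2 : children T r p ⊆
        (Finset.univ.filter (fun u => T.Adj p u)).erase (parent T ht.isConnected r p) := by
      intro u hu
      rw [Finset.mem_erase]
      refine ⟨?_, hsub hu⟩
      intro he
      subst he
      have := (mem_children.1 hu).2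
      omega
    have := Finset.card_le_card hsub2
    rw [Finset.card_erase_of_mem hmem] at this
    have := hdeg p
    omega

open scoped Classical in
lemma g_spec {Δ : ℕ} (ht : T.IsTree) (hm : m = 2 * Δ - 1) (hΔ : 1 ≤ Δ)
    (hdeg : ∀ v : V, (Finset.univ.filter (fun u => T.Adj v u)).card ≤ Δ)
    (hs0 : s0.card = Δ) :
    ∀ v : V, (SS T hc r s0 i0 v).card = Δ ∧
      (v ≠ r →
        aa T hc r s0 i0 v ∈ AA T hc r s0 i0 (parent T hc r v) ∧
        SS T hc r s0 i0 v ∩ SS T hc r s0 i0 (parent T hc r v) = {aa T hc r s0 i0 v}) := by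
  suffices H : ∀ n (v : V), T.dist v r = n →
      (SS T hc r s0 i0 v).card = Δ ∧
      (v ≠ r →
        aa T hc r s0 i0 v ∈ AA T hc r s0 i0 (parent T hc r v) ∧
        SS T hc r s0 i0 v ∩ SS T hc r s0 i0 (parent T hc r v) = {aa T hc r s0 i0 v}) by
    exact fun v => H _ v rfl
  intro n
  induction n using Nat.strong_induction_on with
  | _ n ih =>
    intro v hn
    by_cases hv : v = r
    · subst hv
      rw [SS_r]
      exact ⟨hs0, fun h => absurd rfl h⟩
    · set p := parent T hc r v with hp
      have hpar := parent_spec T hc r v hv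
      have hdp : T.dist p r + 1 = T.dist v r := hpar.2
      have ihp := ih (T.dist p r) (by omega) p rfl
      -- card of A
      have haap : p ≠ r → aa T hc r s0 i0 p ∈ SS T hc r s0 i0 p := by
        intro hpr
        have := (ihp.2 hpr).2
        have : aa T hc r s0 i0 p ∈ SS T hc r s0 i0 p ∩ SS T hc r s0 i0 (parent T hc r p) := by
          rw [this]; exact Finset.mem_singleton_self _
        exact (Finset.mem_inter.1 this).1
      have hcardA : (children T r p).card ≤ (AA T hc r s0 i0 p).card := by
        rw [AA]
        split
        · rename_i hpr
          rw [ihp.1]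
          exact (children_card_le ht hdeg p).1 hpr
        · rename_i hpr
          rw [Finset.card_sdiff_of_subset (Finset.singleton_subset_iff.2 (haap hpr))]
          rw [ihp.1, Finset.card_singleton]
          exact (children_card_le ht hdeg p).2 hpr
      have hvchild : v ∈ children T r p := by
        rw [mem_children]
        exact ⟨hpar.1.symm, by omega⟩
      have hein : aa T hc r s0 i0 v ∈ AA T hc r s0 i0 p := by
        rw [aa_ne hv]
        exact pick_mem hcardA hvchild
      have heinS : aa T hc r s0 i0 v ∈ SS T hc r s0 i0 p := AA_subset hein
      have hSv : SS T hc r s0 i0 v = (SS T hc r s0 i0 p)ᶜ ∪ {aa T hc r s0 i0 v} :=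
        SS_ne hv
      have hdisj : aa T hc r s0 i0 v ∉ (SS T hc r s0 i0 p)ᶜ := by
        rw [Finset.mem_compl]; simpa using heinS
      constructor
      · rw [hSv, Finset.card_union_of_disjoint (Finset.disjoint_singleton_right.2 hdisj),
          Finset.card_compl, ihp.1, Finset.card_singleton]
        simp only [Fintype.card_fin]
        omega
      · intro _
        refine ⟨hein, ?_⟩
        rw [hSv]
        ext i
        simp only [Finset.mem_inter, Finset.mem_union, Finset.mem_compl, Finset.mem_singleton]
        constructor
        · rintro ⟨hi | hi, hiS⟩
          · exact absurd hiS hi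
          · exact hi
        · rintro rfl
          exact ⟨Or.inr rfl, heinS⟩


open scoped Classical in
lemma children_card_le_AA {Δ : ℕ} (ht : T.IsTree) (hm : m = 2 * Δ - 1) (hΔ : 1 ≤ Δ)
    (hdeg : ∀ v : V, (Finset.univ.filter (fun u => T.Adj v u)).card ≤ Δ)
    (hs0 : s0.card = Δ) (p : V) :
    (children T r p).card ≤ (AA T hc r s0 i0 p).card := by
  have hsp := g_spec (hc := hc) (r := r) (i0 := i0) ht hm hΔ hdeg hs0 p
  by_cases hpr : p = r
  · rw [AA, if_pos hpr, hsp.1]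
    exact (children_card_le ht hdeg p).1 hpr
  · have haap : aa T hc r s0 i0 p ∈ SS T hc r s0 i0 p := by
      have h2 := (hsp.2 hpr).2
      have : aa T hc r s0 i0 p ∈ SS T hc r s0 i0 p ∩ SS T hc r s0 i0 (parent T hc r p) := by
        rw [h2]; exact Finset.mem_singleton_self _
      exact (Finset.mem_inter.1 this).1
    rw [AA, if_neg hpr, Finset.card_sdiff_of_subset (Finset.singleton_subset_iff.2 haap), hsp.1,
      Finset.card_singleton]
    exact (children_card_le ht hdeg p).2 hpr

open scoped Classical in
lemma child_facts {Δ : ℕ} (ht : T.IsTree) (hm : m = 2 * Δ - 1) (hΔ : 1 ≤ Δ)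
    (hdeg : ∀ v : V, (Finset.univ.filter (fun u => T.Adj v u)).card ≤ Δ)
    (hs0 : s0.card = Δ) {v u : V} (hadj : T.Adj v u)
    (hd : T.dist u r = T.dist v r + 1) :
    u ∈ children T r v ∧
    aa T ht.isConnected r s0 i0 u =
      pick (AA T ht.isConnected r s0 i0 v) (children T r v) i0 u ∧
    SS T ht.isConnected r s0 i0 u ∩ SS T ht.isConnected r s0 i0 v =
      {aa T ht.isConnected r s0 i0 u} ∧
    aa T ht.isConnected r s0 i0 u ∈ AA T ht.isConnected r s0 i0 v := by
  have hur : u ≠ r := by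
    intro h; subst h
    rw [SimpleGraph.dist_self] at hd
    omega
  have hpu : parent T ht.isConnected r u = v := child_parent T ht r hadj hd
  have hmem : u ∈ children T r v := mem_children.2 ⟨hadj, hd⟩
  have hsp := g_spec (hc := ht.isConnected) (r := r) (i0 := i0) ht hm hΔ hdeg hs0 u
  refine ⟨hmem, ?_, ?_, ?_⟩
  · rw [aa_ne hur, hpu]
  · rw [← hpu]
    exact (hsp.2 hur).2
  · have := (hsp.2 hur).1
    rwa [hpu] at this

open scoped Classical in
lemma key {Δ : ℕ} (ht : T.IsTree) (hm : m = 2 * Δ - 1) (hΔ : 1 ≤ Δ)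
    (hdeg : ∀ v : V, (Finset.univ.filter (fun u => T.Adj v u)).card ≤ Δ)
    (hs0 : s0.card = Δ) :
    ∀ v u w : V, T.Adj v u → T.Adj v w → u ≠ w →
      SS T ht.isConnected r s0 i0 u ∩ SS T ht.isConnected r s0 i0 v ∩
        SS T ht.isConnected r s0 i0 w = ∅ := by
  intro v u w hu hw huw
  have hspv := g_spec (hc := ht.isConnected) (r := r) (i0 := i0) ht hm hΔ hdeg hs0 v
  rcases neighbor_cases T ht r hu with hcu | ⟨hvr, hpu⟩ <;>
    rcases neighbor_cases T ht r hw with hcw | ⟨hvr', hpw⟩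
  · -- both children
    obtain ⟨hmu, hau, hSu, _⟩ := child_facts (i0 := i0) ht hm hΔ hdeg hs0 hu hcu
    obtain ⟨hmw, haw, hSw, _⟩ := child_facts (i0 := i0) ht hm hΔ hdeg hs0 hw hcw
    have hne : aa T ht.isConnected r s0 i0 u ≠ aa T ht.isConnected r s0 i0 w := by
      intro he
      apply huw
      apply pick_inj (children_card_le_AA (hc := ht.isConnected) (r := r) (i0 := i0)
        ht hm hΔ hdeg hs0 v) hmu hmw
      rw [← hau, ← haw, he]
    ext i
    simp only [Finset.mem_inter, Finset.notMem_empty, iff_false, not_and]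
    rintro ⟨hiu, hiv⟩ hiw
    have h1 : i = aa T ht.isConnected r s0 i0 u := by
      have : i ∈ SS T ht.isConnected r s0 i0 u ∩ SS T ht.isConnected r s0 i0 v :=
        Finset.mem_inter.2 ⟨hiu, hiv⟩
      rwa [hSu, Finset.mem_singleton] at this
    have h2 : i = aa T ht.isConnected r s0 i0 w := by
      have : i ∈ SS T ht.isConnected r s0 i0 w ∩ SS T ht.isConnected r s0 i0 v :=
        Finset.mem_inter.2 ⟨hiw, hiv⟩
      rwa [hSw, Finset.mem_singleton] at this
    exact hne (h1 ▸ h2)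
  · -- u child, w parent
    obtain ⟨hmu, hau, hSu, hauA⟩ := child_facts (i0 := i0) ht hm hΔ hdeg hs0 hu hcu
    have hSvw : SS T ht.isConnected r s0 i0 v ∩ SS T ht.isConnected r s0 i0 w =
        {aa T ht.isConnected r s0 i0 v} := by
      rw [hpw]
      exact (hspv.2 hvr').2
    have hne : aa T ht.isConnected r s0 i0 u ≠ aa T ht.isConnected r s0 i0 v := by
      rw [AA, if_neg hvr'] at hauA
      intro he
      rw [he] at hauA
      simp at hauA
    ext i
    simp only [Finset.mem_inter, Finset.notMem_empty, iff_false, not_and]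
    rintro ⟨hiu, hiv⟩ hiw
    have h1 : i = aa T ht.isConnected r s0 i0 u := by
      have : i ∈ SS T ht.isConnected r s0 i0 u ∩ SS T ht.isConnected r s0 i0 v :=
        Finset.mem_inter.2 ⟨hiu, hiv⟩
      rwa [hSu, Finset.mem_singleton] at this
    have h2 : i = aa T ht.isConnected r s0 i0 v := by
      have : i ∈ SS T ht.isConnected r s0 i0 v ∩ SS T ht.isConnected r s0 i0 w :=
        Finset.mem_inter.2 ⟨hiv, hiw⟩
      rwa [hSvw, Finset.mem_singleton] at this
    exact hne (h1 ▸ h2)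
  · -- w child, u parent
    obtain ⟨hmw, haw, hSw, hawA⟩ := child_facts (i0 := i0) ht hm hΔ hdeg hs0 hw hcw
    have hSvu : SS T ht.isConnected r s0 i0 v ∩ SS T ht.isConnected r s0 i0 u =
        {aa T ht.isConnected r s0 i0 v} := by
      rw [hpu]
      exact (hspv.2 hvr).2
    have hne : aa T ht.isConnected r s0 i0 w ≠ aa T ht.isConnected r s0 i0 v := by
      rw [AA, if_neg hvr] at hawA
      intro he
      rw [he] at hawA
      simp at hawA
    ext i
    simp only [Finset.mem_inter, Finset.notMem_empty, iff_false, not_and]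
    rintro ⟨hiu, hiv⟩ hiw
    have h1 : i = aa T ht.isConnected r s0 i0 w := by
      have : i ∈ SS T ht.isConnected r s0 i0 w ∩ SS T ht.isConnected r s0 i0 v :=
        Finset.mem_inter.2 ⟨hiw, hiv⟩
      rwa [hSw, Finset.mem_singleton] at this
    have h2 : i = aa T ht.isConnected r s0 i0 v := by
      have : i ∈ SS T ht.isConnected r s0 i0 v ∩ SS T ht.isConnected r s0 i0 u :=
        Finset.mem_inter.2 ⟨hiv, hiu⟩
      rwa [hSvu, Finset.mem_singleton] at this
    exact hne (h1 ▸ h2)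
  · exact absurd (hpu.trans hpw.symm) huw


open scoped Classical in
lemma exists_S (T : SimpleGraph V) (ht : T.IsTree) (hedge : ∃ u v, T.Adj u v) (Δ : ℕ)
    (hdegle : ∀ v, (T.neighborSet v).ncard ≤ Δ) :
    ∃ S : V → Finset (Fin (2 * Δ - 1)),
      (∀ v, (S v).card = Δ) ∧
      (∀ v u w : V, T.Adj v u → T.Adj v w → u ≠ w → S u ∩ S v ∩ S w = ∅) := by
  obtain ⟨u0, v0, h0⟩ := hedge
  have hΔ : 1 ≤ Δ := by
    have h1 := hdegle u0
    have h2 : 0 < (T.neighborSet u0).ncard := by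
      rw [Set.ncard_pos (Set.toFinite _)]
      exact ⟨v0, h0⟩
    omega
  have hdeg : ∀ v : V, (Finset.univ.filter (fun u => T.Adj v u)).card ≤ Δ := by
    intro v
    have hcoe : ((Finset.univ.filter (fun u => T.Adj v u) : Finset V) : Set V) =
        T.neighborSet v := by
      ext u; simp [SimpleGraph.mem_neighborSet]
    have := hdegle v
    rw [← hcoe, Set.ncard_coe_finset] at this
    exact this
  obtain ⟨s0, _, hs0⟩ := Finset.exists_subset_card_eq (s := (Finset.univ : Finset (Fin (2 * Δ - 1)))) (n := Δ)
    (by simp; omega)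
  have i0 : Fin (2 * Δ - 1) := ⟨0, by omega⟩
  refine ⟨SS T ht.isConnected u0 s0 i0, ?_, ?_⟩
  · exact fun v =>
      (g_spec (hc := ht.isConnected) (r := u0) (i0 := i0) ht rfl hΔ hdeg hs0 v).1
  · exact fun v u w h1 h2 h3 =>
      key (r := u0) (i0 := i0) ht rfl hΔ hdeg hs0 v u w h1 h2 h3

end TreeMSS

/-- **Lemma (mixed stable set decomposition of trees).** Let `T` be a tree with at least one
edge and maximum degree `Δ`.  Then there are `2Δ - 1` sets of edges `E_1, …, E_{2Δ-1}`
(each edge viewed as a 2-element vertex set) and `2Δ - 1` sets of nodes `V_1, …, V_{2Δ-1}`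
such that each `E_i ∪ V_i` (nodes viewed as singletons) is a mixed stable set for `T`
subordinate to the edge set of `T`, and each node of `T` is covered by exactly `Δ` of the
collections `E_i ∪ V_i`. -/
theorem tree_mixedStableSet_cover {V : Type*} [Fintype V] [DecidableEq V]
    (T : SimpleGraph V) (htree : T.IsTree) (hedge : ∃ u v, T.Adj u v)
    (Δ : ℕ)
    (hdegle : ∀ v, (T.neighborSet v).ncard ≤ Δ)
    (hdegeq : ∃ v, (T.neighborSet v).ncard = Δ) :
    ∃ (Es : Fin (2 * Δ - 1) → Finset (Finset V)) (Vs : Fin (2 * Δ - 1) → Finset V),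
      (∀ i, ∀ s ∈ Es i, ∃ u v, T.Adj u v ∧ s = {u, v}) ∧
      (∀ i, MixedStableSet T {s : Finset V | ∃ u v, T.Adj u v ∧ s = {u, v}}
        (Es i ∪ (Vs i).image (fun a => ({a} : Finset V)))) ∧
      (∀ v : V,
        (Finset.univ.filter
          (fun i : Fin (2 * Δ - 1) =>
            ∃ s ∈ Es i ∪ (Vs i).image (fun a => ({a} : Finset V)), v ∈ s)).card = Δ) := by
  classical
  obtain ⟨S, hScard, hSkey⟩ := TreeMSS.exists_S T htree hedge Δ hdegle
  -- every vertex has a neighbor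
  have hnbr : ∀ a : V, ∃ u, T.Adj a u := by
    intro a
    obtain ⟨u0, v0, h0⟩ := hedge
    by_cases ha : a = u0
    · exact ⟨v0, ha ▸ h0⟩
    · obtain ⟨p⟩ := htree.isConnected a u0
      cases p with
      | nil => exact absurd rfl ha
      | cons h q => exact ⟨_, h⟩
  have key' : ∀ (i : Fin (2 * Δ - 1)) (v u w : V), T.Adj v u → T.Adj v w → u ≠ w →
      i ∈ S u → i ∈ S v → i ∈ S w → False := by
    intro i v u w h1 h2 h3 hi1 hi2 hi3
    have := hSkey v u w h1 h2 h3
    have : i ∈ S u ∩ S v ∩ S w := by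
      rw [Finset.mem_inter, Finset.mem_inter]
      exact ⟨⟨hi1, hi2⟩, hi3⟩
    rw [hSkey v u w h1 h2 h3] at this
    exact absurd this (Finset.notMem_empty i)
  set Es : Fin (2 * Δ - 1) → Finset (Finset V) := fun i =>
    Finset.univ.filter
      (fun s : Finset V => ∃ u v, T.Adj u v ∧ s = {u, v} ∧ i ∈ S u ∧ i ∈ S v) with hEs
  set Vs : Fin (2 * Δ - 1) → Finset V := fun i =>
    Finset.univ.filter (fun v => i ∈ S v ∧ ∀ u, T.Adj v u → i ∉ S u) with hVs
  have hmemEs : ∀ i s, s ∈ Es i ↔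
      ∃ u v, T.Adj u v ∧ s = {u, v} ∧ i ∈ S u ∧ i ∈ S v := by
    intro i s; rw [hEs]; simp
  have hmemVs : ∀ i v, v ∈ Vs i ↔ i ∈ S v ∧ ∀ u, T.Adj v u → i ∉ S u := by
    intro i v; rw [hVs]; simp
  -- partner of a vertex of an edge-member
  have hpartner : ∀ (i : Fin (2 * Δ - 1)) (s : Finset V), s ∈ Es i → ∀ x ∈ s,
      ∃ y, T.Adj x y ∧ s = {x, y} ∧ i ∈ S x ∧ i ∈ S y := by
    intro i s hs x hx
    obtain ⟨u, v, hadj, rfl, hiu, hiv⟩ := (hmemEs i s).1 hs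
    rcases Finset.mem_insert.1 hx with rfl | hx
    · exact ⟨v, hadj, rfl, hiu, hiv⟩
    · rw [Finset.mem_singleton] at hx
      subst hx
      exact ⟨u, hadj.symm, Finset.pair_comm _ _, hiv, hiu⟩
  have hmemM : ∀ (i : Fin (2 * Δ - 1)) (s : Finset V),
      s ∈ Es i ∪ (Vs i).image (fun a => ({a} : Finset V)) ↔
      s ∈ Es i ∨ ∃ a ∈ Vs i, s = {a} := by
    intro i s
    rw [Finset.mem_union, Finset.mem_image]
    constructor
    · rintro (h | ⟨a, ha, rfl⟩)
      · exact Or.inl h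
      · exact Or.inr ⟨a, ha, rfl⟩
    · rintro (h | ⟨a, ha, rfl⟩)
      · exact Or.inl h
      · exact Or.inr ⟨a, ha, rfl⟩
  -- disjointness
  have hdisj : ∀ (i : Fin (2 * Δ - 1)) (s t : Finset V),
      s ∈ Es i ∪ (Vs i).image (fun a => ({a} : Finset V)) →
      t ∈ Es i ∪ (Vs i).image (fun a => ({a} : Finset V)) →
      s ≠ t → Disjoint s t := by
    intro i s t hs ht hst
    rw [Finset.disjoint_left]
    intro x hxs hxt
    rcases (hmemM i s).1 hs with hsE | ⟨a, haV, rfl⟩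
    · obtain ⟨y, hxy, hsxy, hix, hiy⟩ := hpartner i s hsE x hxs
      rcases (hmemM i t).1 ht with htE | ⟨b, hbV, rfl⟩
      · obtain ⟨y', hxy', htxy', _, hiy'⟩ := hpartner i t htE x hxt
        have hyy : y ≠ y' := by
          rintro rfl
          exact hst (hsxy.trans htxy'.symm)
        exact key' i x y y' hxy hxy' hyy hiy hix hiy'
      · rw [Finset.mem_singleton] at hxt
        subst hxt
        exact ((hmemVs i x).1 hbV).2 y hxy hiy
    · rw [Finset.mem_singleton] at hxs
      subst hxs
      rcases (hmemM i t).1 ht with htE | ⟨b, hbV, rfl⟩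
      · obtain ⟨y', hxy', _, _, hiy'⟩ := hpartner i t htE x hxt
        exact ((hmemVs i x).1 haV).2 y' hxy' hiy'
      · rw [Finset.mem_singleton] at hxt
        exact hst (by rw [hxt])
  refine ⟨Es, Vs, ?_, ?_, ?_⟩
  · intro i s hs
    obtain ⟨u, v, hadj, rfl, _, _⟩ := (hmemEs i s).1 hs
    exact ⟨u, v, hadj, rfl⟩
  · intro i
    refine ⟨?_, fun s hs t ht => hdisj i s t hs ht, ?_⟩
    · -- subordinate
      intro s hs
      rcases (hmemM i s).1 hs with hsE | ⟨a, haV, rfl⟩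
      · obtain ⟨u, v, hadj, rfl, _, _⟩ := (hmemEs i s).1 hsE
        exact ⟨{u, v}, ⟨u, v, hadj, rfl⟩, Finset.Subset.refl _⟩
      · obtain ⟨u, hu⟩ := hnbr a
        refine ⟨{a, u}, ⟨a, u, hu, rfl⟩, ?_⟩
        intro x hx
        rw [Finset.mem_singleton] at hx
        subst hx
        exact Finset.mem_insert_self _ _
    · -- no adjacency between members
      intro s hs t ht hst u hu v hv hadj
      have hDisj := hdisj i s t hs ht hst
      rcases (hmemM i s).1 hs with hsE | ⟨a, haV, rfl⟩
      · obtain ⟨y, hxy, hsxy, hix, hiy⟩ := hpartner i s hsE u hu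
        have hiv : i ∈ S v := by
          rcases (hmemM i t).1 ht with htE | ⟨b, hbV, rfl⟩
          · exact ((hpartner i t htE v hv).choose_spec).2.2.1
          · rw [Finset.mem_singleton] at hv
            subst hv
            exact ((hmemVs i v).1 hbV).1
        by_cases hyv : y = v
        · subst hyv
          have : y ∈ s := by rw [hsxy]; exact Finset.mem_insert.2 (Or.inr (Finset.mem_singleton_self _))
          exact Finset.disjoint_left.1 hDisj this hv
        · exact key' i u y v hxy hadj hyv hiy hix hiv
      · rw [Finset.mem_singleton] at hu
        subst hu
        have hiv : i ∈ S v := by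
          rcases (hmemM i t).1 ht with htE | ⟨b, hbV, rfl⟩
          · exact ((hpartner i t htE v hv).choose_spec).2.2.1
          · rw [Finset.mem_singleton] at hv
            subst hv
            exact ((hmemVs i v).1 hbV).1
        exact ((hmemVs i u).1 haV).2 v hadj hiv
  · -- coverage
    intro v
    have hset : (Finset.univ.filter
        (fun i : Fin (2 * Δ - 1) =>
          ∃ s ∈ Es i ∪ (Vs i).image (fun a => ({a} : Finset V)), v ∈ s)) =
        Finset.univ.filter (fun i => i ∈ S v) := by
      ext i
      simp only [Finset.mem_filter, Finset.mem_univ, true_and]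
      constructor
      · rintro ⟨s, hs, hvs⟩
        rcases (hmemM i s).1 hs with hsE | ⟨a, haV, rfl⟩
        · exact ((hpartner i s hsE v hvs).choose_spec).2.2.1
        · rw [Finset.mem_singleton] at hvs
          subst hvs
          exact ((hmemVs i v).1 haV).1
      · intro hiv
        by_cases h : ∃ u, T.Adj v u ∧ i ∈ S u
        · obtain ⟨u, hadj, hiu⟩ := h
          refine ⟨{v, u}, ?_, Finset.mem_insert_self _ _⟩
          rw [hmemM]
          exact Or.inl ((hmemEs i _).2 ⟨v, u, hadj, rfl, hiv, hiu⟩)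
        · push_neg at h
          refine ⟨{v}, ?_, Finset.mem_singleton_self _⟩
          rw [hmemM]
          exact Or.inr ⟨v, (hmemVs i v).2 ⟨hiv, h⟩, rfl⟩
    rw [hset]
    have : Finset.univ.filter (fun i => i ∈ S v) = S v := by
      ext i; simp
    rw [this]
    exact hScard v
end
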